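/- arXiv:1004.1287 — 7 statements merged into one kernel-verified Lean document; each statement's English description precedes it below -/
import Mathlib

section
/- The operators e(v) and e(v)* (v∈V) act irreducibly on the exterior algebra Λ(V) of a complex inner product space V: any subspace invariant under all e(v) and e(v)* is (0) or Λ(V). -/
/-- The wedge product `v₁ ∧ ⋯ ∧ vₘ` of a tuple of vectors in the exterior algebra. -/
noncomputable def wedgeList {V : Type*} [AddCommGroup V] [Module ℂ V] {m : ℕ}
    (a : Fin m → V) : ExteriorAlgebra ℂ V :=
  (List.ofFn fun i => ExteriorAlgebra.ι ℂ (a i)).prod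

/-- Exterior multiplication `e(v)` by a vector, as an endomorphism of `Λ(V)`. -/
noncomputable def eOp {V : Type*} [AddCommGroup V] [Module ℂ V] (v : V) :
    Module.End ℂ (ExteriorAlgebra ℂ V) :=
  LinearMap.mulLeft ℂ (ExteriorAlgebra.ι ℂ v)

namespace Stmt2Aux

variable {V : Type*} [AddCommGroup V] [Module ℂ V]

theorem wedge_eq {m : ℕ} (a : Fin m → V) :
    wedgeList a = ExteriorAlgebra.ιMulti ℂ m a := (ExteriorAlgebra.ιMulti_apply a).symm

theorem wedge_mem {m : ℕ} (a : Fin m → V) : wedgeList a ∈ ⋀[ℂ]^m V := by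
  rw [wedge_eq]
  exact ExteriorAlgebra.ιMulti_range ℂ m (Set.mem_range_self a)

variable (inn : ExteriorAlgebra ℂ V →ₗ⋆[ℂ] ExteriorAlgebra ℂ V →ₗ[ℂ] ℂ)

theorem ortho
    (hne : ∀ (m n : ℕ), m ≠ n → ∀ (a : Fin m → V) (b : Fin n → V),
      inn (wedgeList a) (wedgeList b) = 0)
    {m k : ℕ} (hmk : m ≠ k) {x y : ExteriorAlgebra ℂ V}
    (hx : x ∈ ⋀[ℂ]^m V) (hy : y ∈ ⋀[ℂ]^k V) : inn x y = 0 := by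
  have h1 : ∀ (a : Fin m → V), ∀ y ∈ ⋀[ℂ]^k V, inn (wedgeList a) y = 0 := by
    intro a y hy
    rw [← ExteriorAlgebra.ιMulti_span_fixedDegree] at hy
    induction hy using Submodule.span_induction with
    | mem z hz =>
      obtain ⟨b, rfl⟩ := hz
      rw [← wedge_eq]
      exact hne m k hmk a b
    | zero => simp
    | add _ _ _ _ ih1 ih2 => rw [map_add, ih1, ih2, add_zero]
    | smul c _ _ ih => rw [map_smul, smul_eq_mul, ih, mul_zero]
  rw [← ExteriorAlgebra.ιMulti_span_fixedDegree] at hx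
  induction hx using Submodule.span_induction with
  | mem z hz =>
    obtain ⟨b, rfl⟩ := hz
    rw [← wedge_eq]
    exact h1 b y hy
  | zero => simp
  | add _ _ _ _ ih1 ih2 => rw [map_add, LinearMap.add_apply, ih1, ih2, add_zero]
  | smul c _ _ ih => rw [map_smulₛₗ, LinearMap.smul_apply, ih, smul_zero]

theorem inn_self_zero (hpos : ∀ x : ExteriorAlgebra ℂ V, x ≠ 0 → 0 < (inn x x).re)
    {x : ExteriorAlgebra ℂ V} (h : inn x x = 0) : x = 0 := by
  by_contra hx
  have := hpos x hx
  rw [h] at this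
  simp at this

theorem exists_wedge (hpos : ∀ x : ExteriorAlgebra ℂ V, x ≠ 0 → 0 < (inn x x).re)
    {t : ℕ} {x : ExteriorAlgebra ℂ V} (hx : x ∈ ⋀[ℂ]^t V) (hx0 : x ≠ 0) :
    ∃ b : Fin t → V, inn (wedgeList b) x ≠ 0 := by
  by_contra h
  push_neg at h
  have hz : ∀ y ∈ ⋀[ℂ]^t V, inn y x = 0 := by
    intro y hy
    rw [← ExteriorAlgebra.ιMulti_span_fixedDegree] at hy
    induction hy using Submodule.span_induction with
    | mem z hz =>
      obtain ⟨b, rfl⟩ := hz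
      rw [← wedge_eq]
      exact h b
    | zero => simp
    | add _ _ _ _ ih1 ih2 => rw [map_add, LinearMap.add_apply, ih1, ih2, add_zero]
    | smul c _ _ ih => rw [map_smulₛₗ, LinearMap.smul_apply, ih, smul_zero]
  exact hx0 (inn_self_zero inn hpos (hz x hx))

theorem eOp_mem {k : ℕ} (u : V) {x : ExteriorAlgebra ℂ V} (hx : x ∈ ⋀[ℂ]^k V) :
    eOp u x ∈ ⋀[ℂ]^(k+1) V := by
  have h : (⋀[ℂ]^(k+1) V : Submodule ℂ (ExteriorAlgebra ℂ V)) =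
      LinearMap.range (ExteriorAlgebra.ι ℂ : V →ₗ[ℂ] ExteriorAlgebra ℂ V) * ⋀[ℂ]^k V :=
    pow_succ' _ k
  have h2 : eOp u x = ExteriorAlgebra.ι ℂ u * x := rfl
  rw [h2, h]
  exact Submodule.mul_mem_mul (LinearMap.mem_range_self _ u) hx

/-- Partial sums of the grading. -/
noncomputable def auxS : ℕ → Submodule ℂ (ExteriorAlgebra ℂ V)
  | 0 => ⋀[ℂ]^0 V
  | (n+1) => auxS n ⊔ ⋀[ℂ]^(n+1) V

theorem auxS_zero : (auxS 0 : Submodule ℂ (ExteriorAlgebra ℂ V)) = ⋀[ℂ]^0 V := rfl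

theorem auxS_succ (n : ℕ) :
    (auxS (n+1) : Submodule ℂ (ExteriorAlgebra ℂ V)) = auxS n ⊔ ⋀[ℂ]^(n+1) V := rfl

theorem auxS_mono : ∀ n : ℕ, (auxS n : Submodule ℂ (ExteriorAlgebra ℂ V)) ≤ auxS (n+1) :=
  fun _ => le_sup_left

theorem pow_le_auxS : ∀ n k : ℕ, k ≤ n → (⋀[ℂ]^k V) ≤ (auxS n : Submodule ℂ (ExteriorAlgebra ℂ V))
  | 0, k, hk => by rw [Nat.le_zero.mp hk]; exact le_rfl
  | (n+1), k, hk => by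
    rcases Nat.lt_or_ge k (n+1) with h | h
    · exact le_trans (pow_le_auxS n k (Nat.lt_succ_iff.mp h)) (auxS_mono n)
    · rw [le_antisymm hk h]; exact le_sup_right

theorem mem_auxS (x : ExteriorAlgebra ℂ V) : ∃ n, x ∈ (auxS n : Submodule ℂ (ExteriorAlgebra ℂ V)) := by
  have hdir : Directed (· ≤ ·) (auxS : ℕ → Submodule ℂ (ExteriorAlgebra ℂ V)) :=
    Monotone.directed_le (monotone_nat_of_le_succ auxS_mono)
  rw [← Submodule.mem_iSup_of_directed _ hdir]
  have htop : (⨆ n, (auxS n : Submodule ℂ (ExteriorAlgebra ℂ V))) = ⊤ := by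
    rw [eq_top_iff, ← ExteriorAlgebra.ιMulti_span (R := ℂ) (M := V)]
    rw [Submodule.span_le]
    rintro w ⟨⟨n, b⟩, rfl⟩
    exact le_iSup (auxS : ℕ → Submodule ℂ (ExteriorAlgebra ℂ V)) n
      (pow_le_auxS n n le_rfl (ExteriorAlgebra.ιMulti_range ℂ n (Set.mem_range_self b)))
  rw [htop]; trivial

theorem auxS_decomp : ∀ n : ℕ, ∀ x : ExteriorAlgebra ℂ V, x ∈ auxS n →
    ∃ f : ℕ → ExteriorAlgebra ℂ V, (∀ k, f k ∈ ⋀[ℂ]^k V) ∧ x = ∑ k ∈ Finset.range (n+1), f k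
  | 0, x, hx => ⟨fun k => if k = 0 then x else 0, by
      intro k; by_cases h : k = 0
      · rw [h]; exact hx
      · simp [h], by simp⟩
  | (n+1), x, hx => by
    rw [auxS, Submodule.mem_sup] at hx
    obtain ⟨y, hy, z, hz, rfl⟩ := hx
    obtain ⟨f, hf, hfy⟩ := auxS_decomp n y hy
    refine ⟨fun k => if k = n+1 then z else f k, ?_, ?_⟩
    · intro k; by_cases h : k = n+1
      · simpa [h] using hz
      · simpa [h] using hf k
    · rw [Finset.sum_range_succ, if_pos rfl, hfy]
      congr 1
      exact Finset.sum_congr rfl fun k hk => by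
        rw [if_neg (Nat.ne_of_lt (Finset.mem_range.mp hk))]

theorem auxS_le {m n : ℕ} (h : m ≤ n) :
    (auxS m : Submodule ℂ (ExteriorAlgebra ℂ V)) ≤ auxS n :=
  monotone_nat_of_le_succ auxS_mono h

theorem auxS_ortho
    (hne : ∀ (m n : ℕ), m ≠ n → ∀ (a : Fin m → V) (b : Fin n → V),
      inn (wedgeList a) (wedgeList b) = 0) :
    ∀ n {m : ℕ}, n < m → ∀ (b : Fin m → V) {y : ExteriorAlgebra ℂ V},
      y ∈ auxS n → inn (wedgeList b) y = 0
  | 0, m, hm, b, y, hy => ortho inn hne (by omega) (wedge_mem b) hy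
  | (n+1), m, hm, b, y, hy => by
    rw [auxS_succ, Submodule.mem_sup] at hy
    obtain ⟨y1, hy1, y2, hy2, rfl⟩ := hy
    rw [map_add, auxS_ortho hne n (by omega) b hy1,
      ortho inn hne (by omega) (wedge_mem b) hy2, add_zero]

variable (estar : V → Module.End ℂ (ExteriorAlgebra ℂ V))

theorem estar_mem
    (hpos : ∀ x : ExteriorAlgebra ℂ V, x ≠ 0 → 0 < (inn x x).re)
    (hne : ∀ (m n : ℕ), m ≠ n → ∀ (a : Fin m → V) (b : Fin n → V),
      inn (wedgeList a) (wedgeList b) = 0)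
    (hadj : ∀ (u : V) (x y : ExteriorAlgebra ℂ V), inn (eOp u x) y = inn x (estar u y))
    {m : ℕ} (u : V) {y : ExteriorAlgebra ℂ V} (hy : y ∈ ⋀[ℂ]^m V) :
    estar u y ∈ ⋀[ℂ]^(m-1) V := by
  set z := estar u y with hz
  have key : ∀ k : ℕ, k + 1 ≠ m → ∀ x ∈ ⋀[ℂ]^k V, inn x z = 0 := by
    intro k hk x hx
    rw [hz, ← hadj]
    exact ortho inn hne hk (eOp_mem u hx) hy
  obtain ⟨N, hN⟩ := mem_auxS z
  obtain ⟨f, hf, hsum⟩ := auxS_decomp N z hN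
  have hf0 : ∀ k, k ≤ N → k + 1 ≠ m → f k = 0 := by
    intro k hkN hk
    apply inn_self_zero inn hpos
    have h1 : inn (f k) z = 0 := key k hk (f k) (hf k)
    have h2 : inn (f k) z = inn (f k) (f k) := by
      rw [hsum, map_sum]
      exact Finset.sum_eq_single k
        (fun j _ hj => ortho inn hne (Ne.symm hj) (hf k) (hf j))
        (fun hkk => absurd (Finset.mem_range.mpr (Nat.lt_succ_of_le hkN)) hkk)
    rw [← h2, h1]
  rw [hsum]
  apply Submodule.sum_mem
  intro k hk
  by_cases hkm : k + 1 = m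
  · have hk1 : k = m - 1 := by omega
    exact hk1 ▸ hf k
  · rw [hf0 k (Nat.lt_succ_iff.mp (Finset.mem_range.mp hk)) hkm]
    exact Submodule.zero_mem _

theorem estar_auxS
    (hpos : ∀ x : ExteriorAlgebra ℂ V, x ≠ 0 → 0 < (inn x x).re)
    (hne : ∀ (m n : ℕ), m ≠ n → ∀ (a : Fin m → V) (b : Fin n → V),
      inn (wedgeList a) (wedgeList b) = 0)
    (hadj : ∀ (u : V) (x y : ExteriorAlgebra ℂ V), inn (eOp u x) y = inn x (estar u y)) :
    ∀ (n : ℕ) (u : V) {x : ExteriorAlgebra ℂ V}, x ∈ auxS n → estar u x ∈ auxS (n-1)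
  | 0, u, x, hx => estar_mem inn estar hpos hne hadj u (hx : x ∈ ⋀[ℂ]^0 V)
  | (n+1), u, x, hx => by
    rw [auxS_succ, Submodule.mem_sup] at hx
    obtain ⟨y, hy, z, hz, rfl⟩ := hx
    rw [map_add]
    refine Submodule.add_mem _ ?_ ?_
    · exact auxS_le (Nat.sub_le n 1) (estar_auxS hpos hne hadj n u hy)
    · exact pow_le_auxS n n le_rfl (estar_mem inn estar hpos hne hadj u hz)

/-- Iterated application of `estar` along a list of vectors. -/
noncomputable def applyList (estar : V → Module.End ℂ (ExteriorAlgebra ℂ V)) :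
    List V → ExteriorAlgebra ℂ V → ExteriorAlgebra ℂ V
  | [], x => x
  | (u :: l), x => applyList estar l (estar u x)

theorem applyList_pair
    (hadj : ∀ (u : V) (x y : ExteriorAlgebra ℂ V), inn (eOp u x) y = inn x (estar u y)) :
    ∀ (l : List V) (x : ExteriorAlgebra ℂ V),
      inn ((l.map (ExteriorAlgebra.ι ℂ)).prod) x = inn 1 (applyList estar l x)
  | [], x => by simp [applyList]
  | (u :: l), x => by
    rw [List.map_cons, List.prod_cons]
    have h : ExteriorAlgebra.ι ℂ u * (l.map (ExteriorAlgebra.ι ℂ)).prod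
        = eOp u ((l.map (ExteriorAlgebra.ι ℂ)).prod) := rfl
    rw [h, hadj]
    exact applyList_pair hadj l (estar u x)

theorem applyList_memW (W : Submodule ℂ (ExteriorAlgebra ℂ V))
    (hW : ∀ v : V, ∀ x ∈ W, estar v x ∈ W) :
    ∀ (l : List V) (x : ExteriorAlgebra ℂ V), x ∈ W → applyList estar l x ∈ W
  | [], x, hx => hx
  | (u :: l), x, hx => applyList_memW W hW l (estar u x) (hW u x hx)

theorem applyList_auxS
    (hpos : ∀ x : ExteriorAlgebra ℂ V, x ≠ 0 → 0 < (inn x x).re)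
    (hne : ∀ (m n : ℕ), m ≠ n → ∀ (a : Fin m → V) (b : Fin n → V),
      inn (wedgeList a) (wedgeList b) = 0)
    (hadj : ∀ (u : V) (x y : ExteriorAlgebra ℂ V), inn (eOp u x) y = inn x (estar u y)) :
    ∀ (l : List V) (n : ℕ) (x : ExteriorAlgebra ℂ V),
      x ∈ auxS (n + l.length) → applyList estar l x ∈ auxS n
  | [], n, x, hx => by rw [List.length_nil, Nat.add_zero] at hx; exact hx
  | (u :: l), n, x, hx => by
    have h1 : estar u x ∈ (auxS (n + l.length) : Submodule ℂ (ExteriorAlgebra ℂ V)) := by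
      have hx' : x ∈ (auxS (n + l.length + 1) : Submodule ℂ (ExteriorAlgebra ℂ V)) := by
        rw [List.length_cons, ← Nat.add_assoc] at hx; exact hx
      have h2 := estar_auxS inn estar hpos hne hadj (n + l.length + 1) u hx'
      rw [Nat.add_sub_cancel] at h2
      exact h2
    exact applyList_auxS hpos hne hadj l n (estar u x) h1

theorem mem_of_degzero (W : Submodule ℂ (ExteriorAlgebra ℂ V)) {x : ExteriorAlgebra ℂ V}
    (hx : x ∈ W) (h0 : x ∈ (⋀[ℂ]^0 V : Submodule ℂ (ExteriorAlgebra ℂ V))) (hx0 : x ≠ 0) :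
    (1 : ExteriorAlgebra ℂ V) ∈ W := by
  have he : (⋀[ℂ]^0 V : Submodule ℂ (ExteriorAlgebra ℂ V)) = 1 :=
    pow_zero (LinearMap.range (ExteriorAlgebra.ι ℂ : V →ₗ[ℂ] ExteriorAlgebra ℂ V))
  rw [he, Submodule.one_eq_span, Submodule.mem_span_singleton] at h0
  obtain ⟨c, rfl⟩ := h0
  have hc : c ≠ 0 := fun h => hx0 (by simp [h])
  have h2 := W.smul_mem c⁻¹ hx
  rwa [smul_smul, inv_mul_cancel₀ hc, one_smul] at h2

theorem one_mem
    (hpos : ∀ x : ExteriorAlgebra ℂ V, x ≠ 0 → 0 < (inn x x).re)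
    (hne : ∀ (m n : ℕ), m ≠ n → ∀ (a : Fin m → V) (b : Fin n → V),
      inn (wedgeList a) (wedgeList b) = 0)
    (hadj : ∀ (u : V) (x y : ExteriorAlgebra ℂ V), inn (eOp u x) y = inn x (estar u y))
    (W : Submodule ℂ (ExteriorAlgebra ℂ V))
    (hW : ∀ v : V, ∀ x ∈ W, estar v x ∈ W) :
    ∀ (n : ℕ) (x : ExteriorAlgebra ℂ V), x ∈ W → x ≠ 0 → x ∈ auxS n →
      (1 : ExteriorAlgebra ℂ V) ∈ W
  | 0, x, hxW, hx0, hxS => mem_of_degzero W hxW hxS hx0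
  | (n+1), x, hxW, hx0, hxS => by
    rw [auxS_succ, Submodule.mem_sup] at hxS
    obtain ⟨y, hy, z, hz, rfl⟩ := hxS
    by_cases hz0 : z = 0
    · subst hz0
      rw [add_zero] at hxW hx0
      exact one_mem hpos hne hadj W hW n y hxW hx0 hy
    · obtain ⟨b, hb⟩ := exists_wedge inn hpos hz hz0
      have hbx : inn (wedgeList b) (y + z) ≠ 0 := by
        rw [map_add, auxS_ortho inn hne n (Nat.lt_succ_self n) b hy, zero_add]
        exact hb
      have hxS' : y + z ∈ (auxS (n+1) : Submodule ℂ (ExteriorAlgebra ℂ V)) := by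
        rw [auxS_succ]
        exact Submodule.add_mem_sup hy hz
      set l : List V := List.ofFn b with hl
      have hlen : l.length = n + 1 := List.length_ofFn
      have h1 : inn 1 (applyList estar l (y + z)) ≠ 0 := by
        rw [← applyList_pair inn estar hadj l (y + z)]
        have hmap : (l.map (ExteriorAlgebra.ι ℂ)).prod = wedgeList b := by
          rw [hl, List.map_ofFn]; rfl
        rw [hmap]
        exact hbx
      have hne0 : applyList estar l (y + z) ≠ 0 := fun h => h1 (by rw [h, map_zero])
      have hWmem : applyList estar l (y + z) ∈ W := applyList_memW estar W hW l _ hxW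
      have hS0 : applyList estar l (y + z) ∈ (auxS 0 : Submodule ℂ (ExteriorAlgebra ℂ V)) :=
        applyList_auxS inn estar hpos hne hadj l 0 (y + z)
          (by rw [hlen, Nat.zero_add]; exact hxS')
      exact mem_of_degzero W hWmem hS0 hne0

end Stmt2Aux

/-- The operators `e(v)` and `e(v)*` (v ∈ V) act irreducibly on the exterior algebra
`Λ(V)` of a complex inner product space `V`: any subspace invariant under all `e(v)` and
`e(v)*` is `(0)` or `Λ(V)`. -/
theorem stmt_2 {V : Type*} [NormedAddCommGroup V] [InnerProductSpace ℂ V]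
    [FiniteDimensional ℂ V]
    (inn : ExteriorAlgebra ℂ V →ₗ⋆[ℂ] ExteriorAlgebra ℂ V →ₗ[ℂ] ℂ)
    (hsymm : ∀ x y, inn x y = starRingEnd ℂ (inn y x))
    (hpos : ∀ x, x ≠ 0 → 0 < (inn x x).re)
    (hdet : ∀ (m : ℕ) (a b : Fin m → V),
      inn (wedgeList a) (wedgeList b) =
        Matrix.det (Matrix.of fun i j => (inner ℂ (a i) (b j) : ℂ)))
    (hne : ∀ (m n : ℕ), m ≠ n → ∀ (a : Fin m → V) (b : Fin n → V),
      inn (wedgeList a) (wedgeList b) = 0)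
    (estar : V → Module.End ℂ (ExteriorAlgebra ℂ V))
    (hadj : ∀ (u : V) (x y : ExteriorAlgebra ℂ V), inn (eOp u x) y = inn x (estar u y)) :
    ∀ W : Submodule ℂ (ExteriorAlgebra ℂ V),
      (∀ v : V, ∀ x ∈ W, eOp v x ∈ W ∧ estar v x ∈ W) → W = ⊥ ∨ W = ⊤ := by
  intro W hW
  by_cases hbot : W = ⊥
  · exact Or.inl hbot
  right
  obtain ⟨x, hxW, hx0⟩ := Submodule.ne_bot_iff W |>.mp hbot
  obtain ⟨n, hxS⟩ := Stmt2Aux.mem_auxS x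
  have h1 : (1 : ExteriorAlgebra ℂ V) ∈ W :=
    Stmt2Aux.one_mem inn estar hpos hne hadj W (fun v x hx => (hW v x hx).2) n x hxW hx0 hxS
  have hwedge : ∀ (m : ℕ) (b : Fin m → V), wedgeList b ∈ W := by
    intro m
    induction m with
    | zero =>
      intro b
      have hb : wedgeList b = 1 := by simp [wedgeList]
      rw [hb]; exact h1
    | succ n ih =>
      intro b
      have hb : wedgeList b = eOp (b 0) (wedgeList (fun i : Fin n => b i.succ)) := by
        show (List.ofFn fun i => ExteriorAlgebra.ι ℂ (b i)).prod
          = ExteriorAlgebra.ι ℂ (b 0) * (List.ofFn fun i : Fin n => ExteriorAlgebra.ι ℂ (b i.succ)).prod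
        rw [List.ofFn_succ, List.prod_cons]
      rw [hb]
      exact (hW (b 0) _ (ih _)).1
  rw [eq_top_iff, ← ExteriorAlgebra.ιMulti_span (R := ℂ) (M := V), Submodule.span_le]
  rintro w ⟨⟨m, b⟩, rfl⟩
  show ExteriorAlgebra.ιMulti ℂ m b ∈ W
  rw [← Stmt2Aux.wedge_eq]
  exact hwedge m b
end

section
/- Let A be a *-subalgebra of End(V) for a finite-dimensional complex inner product space V (containing the identity and closed under adjoints). Then the double commutant A'' equals A. -/
noncomputable section DCaux

open LinearMap

namespace DC

variable {V : Type*} [NormedAddCommGroup V] [InnerProductSpace ℂ V] [FiniteDimensional ℂ V]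

local notation "⟪" x ", " y "⟫" => @inner ℂ _ _ x y

variable (n : ℕ)

/-- `n`-fold `ℓ²` direct sum of `V`. -/
abbrev W (V : Type*) (n : ℕ) := PiLp 2 (fun _ : Fin n => V)

/-- Diagonal (amplified) action of an operator on `W V n`. -/
def diag (x : V →ₗ[ℂ] V) : W V n →ₗ[ℂ] W V n where
  toFun w := WithLp.toLp 2 (fun i => x (w i))
  map_add' a b := PiLp.ext fun i => by simp [PiLp.add_apply]
  map_smul' c a := PiLp.ext fun i => by simp [PiLp.smul_apply]

@[simp] lemma diag_apply (x : V →ₗ[ℂ] V) (w : W V n) (i : Fin n) :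
    diag n x w i = x (w i) := rfl

/-- Evaluation of operators at a fixed tuple of vectors. -/
def Phi (e : Fin n → V) : (V →ₗ[ℂ] V) →ₗ[ℂ] W V n where
  toFun S := WithLp.toLp 2 (fun i => S (e i))
  map_add' a b := PiLp.ext fun i => by simp [PiLp.add_apply]
  map_smul' c a := PiLp.ext fun i => by simp [PiLp.smul_apply]

@[simp] lemma Phi_apply (e : Fin n → V) (S : V →ₗ[ℂ] V) (i : Fin n) :
    Phi n e S i = S (e i) := rfl

/-- Inclusion of `V` as the `j`-th coordinate of `W V n`. -/
def sing (j : Fin n) : V →ₗ[ℂ] W V n :=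
  (WithLp.linearEquiv 2 ℂ (∀ _ : Fin n, V)).symm.toLinearMap ∘ₗ
    LinearMap.single ℂ (fun _ : Fin n => V) j

lemma sing_apply_same (j : Fin n) (v : V) : sing n j v j = v := by
  show Pi.single (M := fun _ : Fin n => V) j v j = v
  exact Pi.single_eq_same (M := fun _ : Fin n => V) j v

lemma sing_apply_ne {i j : Fin n} (h : i ≠ j) (v : V) : sing n j v i = 0 := by
  show Pi.single (M := fun _ : Fin n => V) j v i = 0
  exact Pi.single_eq_of_ne (M := fun _ : Fin n => V) h v

/-- Projection from `W V n` to the `i`-th coordinate. -/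
def lproj (i : Fin n) : W V n →ₗ[ℂ] V :=
  (LinearMap.proj i) ∘ₗ (WithLp.linearEquiv 2 ℂ (∀ _ : Fin n, V)).toLinearMap

@[simp] lemma lproj_apply (i : Fin n) (w : W V n) : lproj n i w = w i := rfl

end DC

end DCaux

/-- The commutant of a set of linear operators on `V`. -/
def commutant {V : Type*} [NormedAddCommGroup V] [InnerProductSpace ℂ V]
    (S : Set (V →ₗ[ℂ] V)) : Set (V →ₗ[ℂ] V) :=
  {T | ∀ x ∈ S, T * x = x * T}

/-- (Double commutant theorem) Let `A` be a *-subalgebra of `End(V)` for a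
finite-dimensional complex inner product space `V` (containing the identity and closed
under adjoints). Then the double commutant `A''` equals `A`. -/
theorem stmt_3 {V : Type*} [NormedAddCommGroup V] [InnerProductSpace ℂ V]
    [FiniteDimensional ℂ V]
    (A : Subalgebra ℂ (V →ₗ[ℂ] V))
    (hstar : ∀ x ∈ A, LinearMap.adjoint x ∈ A) :
    commutant (commutant (A : Set (V →ₗ[ℂ] V))) = A := by
  apply Set.eq_of_subset_of_subset
  · intro T hT
    classical
    set n := Module.finrank ℂ V with hn
    let e : Module.Basis (Fin n) ℂ V := Module.finBasis ℂ V
    set Φ := DC.Phi n (V := V) (fun i => e i) with hΦ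
    set M : Submodule ℂ (DC.W V n) := (Subalgebra.toSubmodule A).map Φ with hM
    -- membership in M
    have hmemM : ∀ S ∈ A, Φ S ∈ M := fun S hS => ⟨S, hS, rfl⟩
    -- diag x ∘ Φ = Φ ∘ (x * ·)
    have hdiagΦ : ∀ (x S : V →ₗ[ℂ] V), DC.diag n x (Φ S) = Φ (x * S) := fun x S => rfl
    -- M is invariant under diag x for x ∈ A
    have hMinv : ∀ x ∈ A, ∀ w ∈ M, DC.diag n x w ∈ M := by
      rintro x hx w ⟨S, hS, rfl⟩
      exact ⟨x * S, A.mul_mem hx hS, (hdiagΦ x S).symm⟩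
    -- Mᗮ is invariant under diag x for x ∈ A
    have hMperp : ∀ x ∈ A, ∀ z ∈ Mᗮ, DC.diag n x z ∈ Mᗮ := by
      intro x hx z hz
      rw [Submodule.mem_orthogonal]
      intro u hu
      have huA : DC.diag n (LinearMap.adjoint x) u ∈ M := hMinv _ (hstar x hx) u hu
      have : (inner ℂ u (DC.diag n x z) : ℂ)
          = inner ℂ (DC.diag n (LinearMap.adjoint x) u) z := by
        simp only [PiLp.inner_apply, DC.diag_apply]
        refine Finset.sum_congr rfl fun i _ => ?_
        rw [LinearMap.adjoint_inner_left]
      rw [this]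
      exact (Submodule.mem_orthogonal M z).mp hz _ huA
    -- the orthogonal projection onto M, as a linear map
    let P : DC.W V n →ₗ[ℂ] DC.W V n :=
      M.subtype ∘ₗ (M.orthogonalProjection : DC.W V n →L[ℂ] M).toLinearMap
    have hPmem : ∀ w, P w ∈ M := fun w => SetLike.coe_mem _
    have hPid : ∀ w ∈ M, P w = w := fun w hw =>
      Submodule.starProjection_eq_self_iff.mpr hw
    -- P commutes with diag x for x ∈ A
    have hPcomm : ∀ x ∈ A, ∀ w, P (DC.diag n x w) = DC.diag n x (P w) := by
      intro x hx w
      exact Submodule.eq_starProjection_of_mem_orthogonal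
        (hMinv x hx _ (hPmem w))
        (by
          have : DC.diag n x w - DC.diag n x (P w) = DC.diag n x (w - P w) := by
            rw [map_sub]
          rw [this]
          exact hMperp x hx _ (Submodule.sub_starProjection_mem_orthogonal w))
    -- matrix entries of P
    let Pmat : Fin n → Fin n → (V →ₗ[ℂ] V) := fun i j =>
      DC.lproj n i ∘ₗ P ∘ₗ DC.sing n j
    -- sing j (x v) = diag x (sing j v)
    have hsing : ∀ (x : V →ₗ[ℂ] V) (j : Fin n) (v : V),
        DC.sing n j (x v) = DC.diag n x (DC.sing n j v) := by
      intro x j v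
      refine PiLp.ext fun i => ?_
      show DC.sing n j (x v) i = x (DC.sing n j v i)
      rcases eq_or_ne i j with rfl | h
      · rw [DC.sing_apply_same, DC.sing_apply_same]
      · rw [DC.sing_apply_ne n h, DC.sing_apply_ne n h, map_zero]
    -- each Pmat i j lies in the commutant of A
    have hPmatComm : ∀ i j, Pmat i j ∈ commutant (A : Set (V →ₗ[ℂ] V)) := by
      intro i j x hx
      apply LinearMap.ext
      intro v
      show DC.lproj n i (P (DC.sing n j (x v))) = x (DC.lproj n i (P (DC.sing n j v)))
      rw [hsing, hPcomm x hx]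
      rfl
    -- hence T commutes with each Pmat i j
    have hTP : ∀ i j (v : V), T (Pmat i j v) = Pmat i j (T v) := by
      intro i j v
      have := hT (Pmat i j) (hPmatComm i j)
      exact DFunLike.congr_fun this v
    -- decomposition of P via its entries
    have hsum : ∀ (w : DC.W V n) (i : Fin n), P w i = ∑ j, Pmat i j (w j) := by
      intro w i
      have hw : w = ∑ j, DC.sing n j (w j) := by
        refine PiLp.ext fun k => ?_
        show w k = (∑ j, DC.sing n j (w j)) k
        have h1 : (∑ j, DC.sing n j (w j)) k = ∑ j, DC.sing n j (w j) k :=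
          by rw [WithLp.ofLp_sum, Finset.sum_apply]
        have h2 : ∑ j, DC.sing n j (w j) k = DC.sing n k (w k) k :=
          Finset.sum_eq_single_of_mem k (Finset.mem_univ k)
            fun j _ hj => DC.sing_apply_ne n (Ne.symm hj) _
        rw [h1, h2, DC.sing_apply_same]
      calc P w i = DC.lproj n i (P w) := rfl
        _ = ∑ j, Pmat i j (w j) := by
            conv_lhs => rw [hw]
            rw [map_sum, map_sum]
            rfl
    -- the key vector
    set w₀ : DC.W V n := Φ 1 with hw₀
    have hw₀M : w₀ ∈ M := hmemM 1 A.one_mem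
    have hPw₀ : P w₀ = w₀ := hPid w₀ hw₀M
    set u : DC.W V n := DC.diag n T w₀ with hu
    have hPu : P u = u := by
      refine PiLp.ext fun i => ?_
      show P u i = u i
      rw [hsum u i]
      have : ∀ j, Pmat i j (u j) = T (Pmat i j (w₀ j)) := by
        intro j
        rw [hu]
        show Pmat i j (T (w₀ j)) = T (Pmat i j (w₀ j))
        rw [hTP]
      rw [Finset.sum_congr rfl fun j _ => this j, ← map_sum, ← hsum w₀ i, hPw₀]
      rfl
    have huM : u ∈ M := by rw [← hPu]; exact hPmem u
    obtain ⟨a, haA, hae⟩ := huM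
    have hTa : T = a := Module.Basis.ext e fun i => (congrFun (congrArg WithLp.ofLp hae) i).symm
    rw [hTa]
    exact haA
  · intro a ha S hS
    exact (hS a ha).symm
end

section
/- A finite-dimensional real Lie algebra 𝔤 that is semisimple and compact (admits an invariant inner product and has trivial centre) has negative-definite Killing form B(X,Y) = Tr(ad X ∘ ad Y); conversely if B is negative definite then 𝔤 is compact semisimple. -/
/-- A finite-dimensional real Lie algebra `𝔤` that is semisimple and compact (admits an
invariant inner product and has trivial centre) has negative-definite Killing form
`B(X,Y) = Tr(ad X ∘ ad Y)`; conversely if `B` is negative definite then `𝔤` is compact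
semisimple. -/
theorem stmt_10 {L : Type*} [LieRing L] [LieAlgebra ℝ L] [Module.Finite ℝ L] :
    ((∃ B : LinearMap.BilinForm ℝ L,
        (∀ X Y : L, B X Y = B Y X) ∧
        (∀ X : L, X ≠ 0 → 0 < B X X) ∧
        (∀ X Y Z : L, B ⁅X, Y⁆ Z + B Y ⁅X, Z⁆ = 0)) ∧
      LieAlgebra.center ℝ L = ⊥)
    ↔ (∀ X : L, X ≠ 0 → killingForm ℝ L X X < 0) := by
  constructor
  · rintro ⟨⟨B, hsymm, hpos, hinv⟩, hcen⟩ X hX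
    have hBnonneg : ∀ x : L, 0 ≤ B x x := fun x => by
      rcases eq_or_ne x 0 with rfl | h
      · simp
      · exact (hpos x h).le
    letI core : InnerProductSpace.Core ℝ L :=
      { inner := fun x y => B x y
        conj_inner_symm := fun x y => by simpa using hsymm y x
        re_inner_nonneg := fun x => by simpa using hBnonneg x
        add_left := fun x y z => by simp
        smul_left := fun x y r => by simp
        definite := fun x hx => by
          by_contra h
          exact (hpos x h).ne' (by simpa using hx) }
    letI : NormedAddCommGroup L := core.toNormedAddCommGroup
    letI : InnerProductSpace ℝ L := InnerProductSpace.ofCore core.toCore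
    haveI : FiniteDimensional ℝ L := ‹Module.Finite ℝ L›
    set b := stdOrthonormalBasis ℝ L with hb
    set A := LieAlgebra.ad ℝ L X with hA
    set M := LinearMap.toMatrix b.toBasis b.toBasis A with hM
    have hMentry : ∀ i j, M i j = B (b i) (A (b j)) := by
      intro i j
      rw [hM, LinearMap.toMatrix_apply]
      have := b.repr_apply_apply (A (b.toBasis j)) i
      simp only [OrthonormalBasis.coe_toBasis_repr_apply] at *
      rw [this]
      simp [OrthonormalBasis.coe_toBasis]
      rfl
    have hskew : ∀ i j, M i j = - M j i := by
      intro i j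
      rw [hMentry, hMentry]
      have h1 := hinv X (b j) (b i)
      have h2 : B (b i) (A (b j)) = B (A (b j)) (b i) := hsymm _ _
      rw [h2, hA]
      simp only [LieAlgebra.ad_apply] at *
      linarith
    have hKtr : killingForm ℝ L X X = (M * M).trace := by
      rw [killingForm_apply_apply, LinearMap.trace_eq_matrix_trace ℝ b.toBasis,
        LinearMap.toMatrix_comp b.toBasis b.toBasis b.toBasis]
    have htr : (M * M).trace = -∑ i, ∑ j, (M i j)^2 := by
      rw [Matrix.trace]
      rw [Finset.sum_comm]
      simp only [Matrix.diag_apply, Matrix.mul_apply]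
      rw [← Finset.sum_neg_distrib]
      refine Finset.sum_congr rfl fun i _ => ?_
      rw [← Finset.sum_neg_distrib]
      refine Finset.sum_congr rfl fun j _ => ?_
      rw [hskew j i]
      ring
    have hle : killingForm ℝ L X X ≤ 0 := by
      rw [hKtr, htr, neg_nonpos]
      positivity
    rcases hle.lt_or_eq with h | h
    · exact h
    · exfalso
      have hMzero : ∀ i j, M i j = 0 := by
        have hsum : ∑ i, ∑ j, (M i j)^2 = 0 := by
          rw [hKtr, htr] at h
          linarith
        intro i j
        have h1 : ∀ i ∈ Finset.univ, (0:ℝ) ≤ ∑ j, (M i j)^2 := fun i _ => by positivity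
        have h2 := (Finset.sum_eq_zero_iff_of_nonneg h1).mp hsum i (Finset.mem_univ i)
        have h3 : ∀ j ∈ Finset.univ, (0:ℝ) ≤ (M i j)^2 := fun j _ => by positivity
        have := (Finset.sum_eq_zero_iff_of_nonneg h3).mp h2 j (Finset.mem_univ j)
        exact (pow_eq_zero_iff two_ne_zero).mp this
      have hAzero : A = 0 := by
        apply (LinearMap.toMatrix b.toBasis b.toBasis).injective
        rw [map_zero, ← hM]
        ext i j
        exact hMzero i j
      have hXc : X ∈ LieAlgebra.center ℝ L := by
        rw [LieModule.mem_maxTrivSubmodule]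
        intro y
        have : ⁅X, y⁆ = 0 := by
          have := LinearMap.congr_fun hAzero y
          simpa [hA] using this
        rw [← lie_skew, this, neg_zero]
      rw [hcen] at hXc
      exact hX (by simpa using hXc)
  · intro hK
    refine ⟨⟨-(killingForm ℝ L), ?_, ?_, ?_⟩, ?_⟩
    · intro X Y
      simp [LieModule.traceForm_comm ℝ L L X Y]
    · intro X hX
      simpa using hK X hX
    · intro X Y Z
      have h1 : killingForm ℝ L ⁅X, Y⁆ Z = killingForm ℝ L X ⁅Y, Z⁆ :=
        LieModule.traceForm_apply_lie_apply ℝ L L X Y Z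
      have h2 : killingForm ℝ L Y ⁅X, Z⁆ = killingForm ℝ L ⁅Y, X⁆ Z :=
        (LieModule.traceForm_apply_lie_apply ℝ L L Y X Z).symm
      have h3 : (⁅Y, X⁆ : L) = -⁅X, Y⁆ := (lie_skew Y X).symm
      have h4 : killingForm ℝ L ⁅Y, X⁆ Z = -(killingForm ℝ L ⁅X, Y⁆ Z) := by
        rw [h3, map_neg, LinearMap.neg_apply]
      simp only [LinearMap.neg_apply, LinearMap.BilinForm.neg_apply]
      rw [h2, h4]
      ring
    · rw [eq_bot_iff]
      intro X hXc
      simp only [LieSubmodule.mem_bot]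
      by_contra h
      have hA : LieAlgebra.ad ℝ L X = 0 := by
        ext y
        have := (LieModule.mem_maxTrivSubmodule ℝ L L X).mp hXc y
        rw [LieAlgebra.ad_apply, ← lie_skew X y, this, neg_zero]
        simp
      have : killingForm ℝ L X X = 0 := by
        rw [killingForm_apply_apply, hA]
        simp
      exact absurd this (hK X h).ne
end

section
/- Let E, F, H be operators on a complex inner product space satisfying [E,F] = H, [H,E] = 2E, [H,F] = −2F, with E* = F and H* = H. If a vector v ≠ 0 satisfies Ev = 0 and Hv = λv, then λ is a non-negative integer. -/
/-- Let `E, F, H` be operators on a complex inner product space satisfying `[E,F] = H`,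
`[H,E] = 2E`, `[H,F] = −2F`, with `E* = F` and `H* = H`. If a vector `v ≠ 0` satisfies
`Ev = 0` and `Hv = λv`, then `λ` is a non-negative integer. -/
theorem stmt_12 {𝓗 : Type*} [NormedAddCommGroup 𝓗] [InnerProductSpace ℂ 𝓗]
    (E F H : 𝓗 →ₗ[ℂ] 𝓗)
    (hEF : E ∘ₗ F - F ∘ₗ E = H)
    (hHE : H ∘ₗ E - E ∘ₗ H = 2 • E)
    (hHF : H ∘ₗ F - F ∘ₗ H = -(2 • F))
    (hadjE : ∀ x y : 𝓗, (inner ℂ (E x) y : ℂ) = inner ℂ x (F y))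
    (hadjH : ∀ x y : 𝓗, (inner ℂ (H x) y : ℂ) = inner ℂ x (H y))
    (v : 𝓗) (hv : v ≠ 0) (l : ℂ) (hEv : E v = 0) (hHv : H v = l • v) :
    ∃ d : ℕ, l = d := by
  have hEFp : ∀ x : 𝓗, E (F x) = F (E x) + H x := by
    intro x
    have := DFunLike.congr_fun hEF x
    simp only [LinearMap.sub_apply, LinearMap.comp_apply] at this
    linear_combination (norm := module) this
  have hHFp : ∀ x : 𝓗, H (F x) = F (H x) - (2 : ℂ) • F x := by
    intro x
    have := DFunLike.congr_fun hHF x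
    simp only [LinearMap.sub_apply, LinearMap.comp_apply, LinearMap.neg_apply,
      LinearMap.smul_apply] at this
    linear_combination (norm := module) this
  -- l is real
  have hreal : (starRingEnd ℂ) l = l := by
    have h1 := hadjH v v
    rw [hHv, inner_smul_left, inner_smul_right] at h1
    have h2 : (inner ℂ v v : ℂ) ≠ 0 := inner_self_ne_zero.mpr hv
    exact mul_right_cancel₀ h2 h1
  set lr : ℝ := l.re with hlr
  have hl : l = (lr : ℂ) := (Complex.conj_eq_iff_re.mp hreal).symm
  -- the chain of vectors
  set w : ℕ → 𝓗 := fun n => (⇑F)^[n] v with hw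
  have hw0 : w 0 = v := rfl
  have hws : ∀ n, w (n + 1) = F (w n) := fun n => Function.iterate_succ_apply' F n v
  -- H action
  have hHw : ∀ n : ℕ, H (w n) = (l - 2 * n) • w n := by
    intro n
    induction n with
    | zero => simpa [hw0] using hHv
    | succ n ih =>
      rw [hws n, hHFp, ih, map_smul, ← hws n]
      push_cast
      match_scalars
      ring
  -- E action
  have hEw : ∀ n : ℕ, E (w (n + 1)) = (((n : ℂ) + 1) * (l - n)) • w n := by
    intro n
    induction n with
    | zero =>
      rw [hws 0, hEFp, hw0, hEv, map_zero, hHv, ← hw0]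
      match_scalars; ring
    | succ n ih =>
      rw [hws (n + 1), hEFp, ih, hHw (n + 1), map_smul, ← hws n]
      push_cast
      match_scalars
      ring
  -- norms
  set a : ℕ → ℝ := fun n => ‖w n‖ ^ 2 with ha
  have ha0 : 0 < a 0 := by
    show 0 < ‖v‖ ^ 2
    have := norm_pos_iff.mpr hv
    positivity
  have hann : ∀ n, 0 ≤ a n := fun n => by positivity
  have hrec : ∀ n : ℕ, a (n + 1) = ((n : ℝ) + 1) * (lr - n) * a n := by
    intro n
    have h1 : (inner ℂ (E (w (n + 1))) (w n) : ℂ) = inner ℂ (w (n + 1)) (w (n + 1)) := by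
      rw [hadjE, ← hws]
    rw [hEw, inner_smul_left] at h1
    have hcoef : ((n : ℂ) + 1) * (l - n) = ((((n : ℝ) + 1) * (lr - n) : ℝ) : ℂ) := by
      rw [hl]; push_cast; ring
    rw [hcoef, Complex.conj_ofReal] at h1
    have e1 : (inner ℂ (w n) (w n) : ℂ) = ((a n : ℝ) : ℂ) := by
      show _ = ((‖w n‖ ^ 2 : ℝ) : ℂ)
      rw [inner_self_eq_norm_sq_to_K]
      norm_cast
    have e2 : (inner ℂ (w (n + 1)) (w (n + 1)) : ℂ) = ((a (n + 1) : ℝ) : ℂ) := by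
      show _ = ((‖w (n + 1)‖ ^ 2 : ℝ) : ℂ)
      rw [inner_self_eq_norm_sq_to_K]
      norm_cast
    rw [e1, e2] at h1
    exact_mod_cast h1.symm
  -- final argument: lr must be a natural number
  have hnat : ∃ d : ℕ, lr = d := by
    by_contra hcon
    push_neg at hcon
    have step : ∀ n : ℕ, 0 < a n → 0 < a (n + 1) ∧ (n : ℝ) < lr := by
      intro n hpos
      have h1 := hrec n
      have h2 := hann (n + 1)
      have hge : (n : ℝ) ≤ lr := by
        by_contra hlt'
        push_neg at hlt'
        nlinarith [mul_pos (mul_pos (show (0:ℝ) < (n:ℝ)+1 by positivity)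
          (show (0:ℝ) < (n:ℝ) - lr by linarith)) hpos]
      have hne : lr ≠ (n : ℝ) := hcon n
      have hlt : (n : ℝ) < lr := lt_of_le_of_ne hge (Ne.symm hne)
      refine ⟨?_, hlt⟩
      rw [h1]
      have : (0 : ℝ) < lr - n := by linarith
      positivity
    have hposall : ∀ n, 0 < a n := by
      intro n
      induction n with
      | zero => exact ha0
      | succ n ih => exact (step n ih).1
    obtain ⟨N, hN⟩ := exists_nat_gt lr
    exact absurd (step N (hposall N)).2 (not_lt.mpr hN.le)
  obtain ⟨d, hd⟩ := hnat
  exact ⟨d, by rw [hl, hd]; norm_cast⟩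
end

section
/- Every finite-dimensional representation of the complex Lie algebra sl₂ (with basis E, F, H satisfying [E,F]=H, [H,E]=2E, [H,F]=−2F) is completely reducible, i.e. a direct sum of irreducible subrepresentations. -/
set_option maxHeartbeats 1000000

open LieAlgebra.SpecialLinear LieModule Module

attribute [local instance 100] LieRing.ofAssociativeRing

namespace Sl2Weyl

noncomputable section

abbrev L2 : Type := sl (Fin 2) ℂ

lemma mem_sl_iff (A : Matrix (Fin 2) (Fin 2) ℂ) : A ∈ sl (Fin 2) ℂ ↔ A 0 0 + A 1 1 = 0 := by
  show A ∈ LinearMap.ker (Matrix.traceLinearMap (Fin 2) ℂ ℂ) ↔ _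
  rw [LinearMap.mem_ker]
  simp [Matrix.trace, Matrix.diag, Fin.sum_univ_two]

def EE : L2 := single (0 : Fin 2) 1 (by decide) (1 : ℂ)
def FF : L2 := single (1 : Fin 2) 0 (by decide) (1 : ℂ)
def HH : L2 := ⟨Matrix.diagonal ![1, -1], by
  rw [mem_sl_iff]; simp [Matrix.diagonal]⟩

lemma matrix_eq (x : L2) :
    ∀ i j, (x.val) i j = (x.val) i j := fun _ _ => rfl

lemma hEF : ⁅EE, FF⁆ = HH := by
  apply Subtype.ext
  rw [sl_bracket]
  show EE.val * FF.val - FF.val * EE.val = Matrix.diagonal ![1, -1]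
  ext i j
  fin_cases i <;> fin_cases j <;>
    simp [EE, FF, Matrix.mul_apply, Fin.sum_univ_two, Matrix.single, Matrix.diagonal]

lemma hHE : ⁅HH, EE⁆ = (2 : ℂ) • EE := by
  apply Subtype.ext
  rw [sl_bracket]
  show HH.val * EE.val - EE.val * HH.val = (2 : ℂ) • (EE.val)
  ext i j
  fin_cases i <;> fin_cases j <;>
    simp [EE, FF, HH, Matrix.mul_apply, Fin.sum_univ_two, Matrix.single,
      Matrix.diagonal] <;> norm_num

lemma hHF : ⁅HH, FF⁆ = (-2 : ℂ) • FF := by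
  apply Subtype.ext
  rw [sl_bracket]
  show HH.val * FF.val - FF.val * HH.val = (-2 : ℂ) • (FF.val)
  ext i j
  fin_cases i <;> fin_cases j <;>
    simp [EE, FF, HH, Matrix.mul_apply, Fin.sum_univ_two, Matrix.single,
      Matrix.diagonal] <;> norm_num

lemma triple : IsSl2Triple (HH : L2) EE FF where
  h_ne_zero := by
    intro h
    have := congrArg (fun x : L2 => (x.val) 0 0) h
    simp [HH, Matrix.diagonal] at this
  lie_e_f := hEF
  lie_h_e_nsmul := by rw [hHE]; module
  lie_h_f_nsmul := by rw [hHF]; module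

/-- every element of sl2 is a combination of E, F, H -/
lemma span_EFH (x : L2) : ∃ a b c : ℂ, x = a • EE + b • FF + c • HH := by
  refine ⟨x.val 0 1, x.val 1 0, x.val 0 0, ?_⟩
  have htr : x.val 0 0 + x.val 1 1 = 0 := (mem_sl_iff _).mp x.2
  apply Subtype.ext
  show x.val = (x.val 0 1 • EE + x.val 1 0 • FF + x.val 0 0 • HH : L2).val
  have hval : (x.val 0 1 • EE + x.val 1 0 • FF + x.val 0 0 • HH : L2).val
      = x.val 0 1 • EE.val + x.val 1 0 • FF.val + x.val 0 0 • HH.val := rfl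
  rw [hval]
  ext i j
  fin_cases i <;> fin_cases j <;>
    simp [EE, FF, HH, Matrix.single, Matrix.diagonal] <;> linear_combination htr


section
variable {V : Type*} [AddCommGroup V] [Module ℂ V] [LieRingModule L2 V] [LieModule ℂ L2 V]

lemma act_zero_of_gen {v : V} (hE : ⁅EE, v⁆ = 0) (hF : ⁅FF, v⁆ = 0) (hH : ⁅HH, v⁆ = 0)
    (x : L2) : ⁅x, v⁆ = 0 := by
  obtain ⟨a, b, c, rfl⟩ := span_EFH x
  simp [hE, hF, hH]

lemma act_zero_of_lie_lie (h : ∀ (x y : L2) (v : V), ⁅x, ⁅y, v⁆⁆ = 0) (x : L2) (v : V) :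
    ⁅x, v⁆ = 0 := by
  refine act_zero_of_gen ?_ ?_ ?_ x
  · have : ⁅⁅HH, EE⁆, v⁆ = 0 := by rw [lie_lie, h, h, sub_zero]
    rw [hHE, smul_lie, smul_eq_zero] at this
    exact this.resolve_left (by norm_num)
  · have : ⁅⁅HH, FF⁆, v⁆ = 0 := by rw [lie_lie, h, h, sub_zero]
    rw [hHF, smul_lie, smul_eq_zero] at this
    exact this.resolve_left (by norm_num)
  · rw [← hEF, lie_lie, h, h, sub_zero]

/-- an endomorphism of a 1-dimensional space with zero trace is zero -/
lemma end_eq_zero_of_trace {Q : Type*} [AddCommGroup Q] [Module ℂ Q]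
    (h1 : finrank ℂ Q = 1) (A : Module.End ℂ Q) (hA : LinearMap.trace ℂ Q A = 0) : A = 0 := by
  have : FiniteDimensional ℂ Q := .of_finrank_pos (by omega)
  obtain ⟨v, hv0, hspan⟩ := finrank_eq_one_iff'.mp h1
  obtain ⟨c, hc⟩ := hspan (A v)
  have hAc : A = c • (1 : Module.End ℂ Q) := by
    apply LinearMap.ext
    intro w
    obtain ⟨d, rfl⟩ := hspan w
    simp only [map_smul, hc, LinearMap.smul_apply, Module.End.one_apply, smul_comm d c v]
  have : c = 0 := by
    rw [hAc] at hA
    simpa [LinearMap.trace_one, h1] using hA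
  rw [hAc, this, zero_smul]

/-- 1-dimensional modules have trivial action -/
lemma triv_of_finrank_one (h1 : finrank ℂ V = 1) (x : L2) (v : V) : ⁅x, v⁆ = 0 := by
  have key : ∀ y z : L2, toEnd ℂ L2 V ⁅y, z⁆ = 0 := by
    intro y z
    apply end_eq_zero_of_trace h1
    rw [LieHom.map_lie, Ring.lie_def, map_sub, LinearMap.trace_mul_comm, sub_self]
  have hgen : ∀ w : V, ⁅EE, w⁆ = 0 ∧ ⁅FF, w⁆ = 0 ∧ ⁅HH, w⁆ = 0 := by
    intro w
    refine ⟨?_, ?_, ?_⟩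
    · have := congrArg (fun A : Module.End ℂ V => A w) (key HH EE)
      simp only [LinearMap.zero_apply] at this
      rw [hHE] at this
      have : (2:ℂ) • ⁅EE, w⁆ = 0 := by
        simpa [toEnd_apply_apply] using this
      simpa using (smul_eq_zero.mp this).resolve_left (by norm_num)
    · have := congrArg (fun A : Module.End ℂ V => A w) (key HH FF)
      simp only [LinearMap.zero_apply] at this
      rw [hHF] at this
      have : (-2:ℂ) • ⁅FF, w⁆ = 0 := by
        simpa [toEnd_apply_apply] using this
      simpa using (smul_eq_zero.mp this).resolve_left (by norm_num)
    · have := congrArg (fun A : Module.End ℂ V => A w) (key EE FF)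
      rw [hEF] at this
      simpa [toEnd_apply_apply] using this
  exact act_zero_of_gen (hgen v).1 (hgen v).2.1 (hgen v).2.2 x

lemma lie_mul_ring {A : Type*} [Ring A] (a b c : A) : ⁅a, b * c⁆ = ⁅a, b⁆ * c + b * ⁅a, c⁆ := by
  simp only [Ring.lie_def]
  noncomm_ring

variable (V) in
/-- The Casimir operator. -/
def cas : Module.End ℂ V :=
  toEnd ℂ L2 V EE * toEnd ℂ L2 V FF + toEnd ℂ L2 V FF * toEnd ℂ L2 V EE +
    (2⁻¹ : ℂ) • (toEnd ℂ L2 V HH * toEnd ℂ L2 V HH)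

lemma cas_apply (v : V) :
    cas V v = ⁅EE, ⁅FF, v⁆⁆ + ⁅FF, ⁅EE, v⁆⁆ + (2⁻¹ : ℂ) • ⁅HH, ⁅HH, v⁆⁆ := by
  simp [cas, toEnd_apply_apply]

lemma lie_toEnd_cas (x : L2) : ⁅toEnd ℂ L2 V x, cas V⁆ = 0 := by
  set τ := toEnd ℂ L2 V with hτ
  have hee : ⁅τ EE, τ FF⁆ = τ HH := by rw [← LieHom.map_lie, hEF]
  have hffe : ⁅τ FF, τ EE⁆ = -τ HH := by rw [← lie_skew, hee]
  have hhe : ⁅τ HH, τ EE⁆ = (2:ℂ) • τ EE := by rw [← LieHom.map_lie, hHE, map_smul]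
  have hhf : ⁅τ HH, τ FF⁆ = (-2:ℂ) • τ FF := by rw [← LieHom.map_lie, hHF, map_smul]
  have heh : ⁅τ EE, τ HH⁆ = (-2:ℂ) • τ EE := by
    rw [← lie_skew, hhe]; module
  have hfh : ⁅τ FF, τ HH⁆ = (2:ℂ) • τ FF := by
    rw [← lie_skew, hhf]; module
  obtain ⟨a, b, c, rfl⟩ := span_EFH x
  rw [map_add, map_add, map_smul, map_smul, map_smul,
    add_lie, add_lie, smul_lie, smul_lie, smul_lie]
  have kE : ⁅τ EE, cas V⁆ = 0 := by
    rw [cas, lie_add, lie_add, lie_smul, lie_mul_ring, lie_mul_ring, lie_mul_ring,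
      lie_self, hee, heh]
    simp only [zero_mul, mul_zero, add_zero, zero_add, smul_mul_assoc, mul_smul_comm]
    module
  have kF : ⁅τ FF, cas V⁆ = 0 := by
    rw [cas, lie_add, lie_add, lie_smul, lie_mul_ring, lie_mul_ring, lie_mul_ring,
      lie_self, hffe, hfh]
    simp only [zero_mul, mul_zero, add_zero, zero_add, smul_mul_assoc, mul_smul_comm,
      neg_mul, mul_neg]
    module
  have kH : ⁅τ HH, cas V⁆ = 0 := by
    rw [cas, lie_add, lie_add, lie_smul, lie_mul_ring, lie_mul_ring, lie_mul_ring,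
      lie_self, hhe, hhf]
    simp only [zero_mul, mul_zero, add_zero, zero_add, smul_mul_assoc, mul_smul_comm]
    module
  rw [kE, kF, kH]
  simp

lemma cas_lie (x : L2) (v : V) : cas V ⁅x, v⁆ = ⁅x, cas V v⁆ := by
  have h := lie_toEnd_cas (V := V) x
  rw [Ring.lie_def, sub_eq_zero] at h
  have := congrArg (fun A : Module.End ℂ V => A v) h
  simpa [toEnd_apply_apply] using this.symm

lemma cas_mem (W : LieSubmodule ℂ L2 V) {v : V} (hv : v ∈ W) : cas V v ∈ W := by
  rw [cas_apply]
  exact W.add_mem (W.add_mem (W.lie_mem (W.lie_mem hv)) (W.lie_mem (W.lie_mem hv)))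
    (W.smul_mem _ (W.lie_mem (W.lie_mem hv)))


end

section
variable {V : Type*} [AddCommGroup V] [Module ℂ V] [LieRingModule L2 V] [LieModule ℂ L2 V]
  [FiniteDimensional ℂ V]

lemma exists_ne_zero_of_ne_bot {W : LieSubmodule ℂ L2 V} (hW : W ≠ ⊥) :
    ∃ v ∈ W, v ≠ 0 := by
  by_contra h
  push_neg at h
  exact hW (LieSubmodule.eq_bot_iff W |>.mpr fun m hm => h m hm)

/-- An endomorphism commuting with the action and preserving an atom acts on it by a scalar. -/
lemma scalar_on_atom {W : LieSubmodule ℂ L2 V} (hW : IsAtom W) (A : Module.End ℂ V)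
    (hcomm : ∀ (x : L2) (v : V), A ⁅x, v⁆ = ⁅x, A v⁆)
    (hinv : ∀ v ∈ W, A v ∈ W) : ∃ c : ℂ, ∀ v ∈ W, A v = c • v := by
  obtain ⟨v₀, hv₀, hv₀0⟩ := exists_ne_zero_of_ne_bot hW.1
  have : Nontrivial W.toSubmodule := nontrivial_of_ne ⟨v₀, hv₀⟩ 0 (by simpa using hv₀0)
  set A' : Module.End ℂ W.toSubmodule := A.restrict (p := W.toSubmodule) (q := W.toSubmodule)
    (fun v hv => hinv v hv) with hA'
  obtain ⟨c, hc⟩ := A'.exists_eigenvalue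
  obtain ⟨w, hw⟩ := hc.exists_hasEigenvector
  have hwV : A (w : V) = c • (w : V) := by
    have := hw.apply_eq_smul
    have h2 := congrArg (Subtype.val) this
    simpa [hA', LinearMap.restrict_apply] using h2
  set K : LieSubmodule ℂ L2 V :=
    { toSubmodule := W.toSubmodule ⊓ LinearMap.ker (A - c • (1 : Module.End ℂ V))
      lie_mem := by
        rintro x v ⟨hv1, hv2⟩
        have hv2' : A v = c • v := by
          have := LinearMap.mem_ker.mp hv2
          simpa [sub_eq_zero] using this
        refine ⟨W.lie_mem hv1, LinearMap.mem_ker.mpr ?_⟩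
        simp only [LinearMap.sub_apply, LinearMap.smul_apply, Module.End.one_apply, sub_eq_zero]
        rw [hcomm, hv2', lie_smul] } with hK
  have hKW : K ≤ W := fun v hv => hv.1
  have hKne : K ≠ ⊥ := by
    intro h
    apply hw.2
    have hwK : (w : V) ∈ K := by
      refine ⟨w.2, LinearMap.mem_ker.mpr ?_⟩
      simp only [LinearMap.sub_apply, LinearMap.smul_apply, Module.End.one_apply, sub_eq_zero,
        hwV]
    rw [h] at hwK
    simpa using hwK
  have hKeq : K = W := by
    rcases lt_or_eq_of_le hKW with h | h
    · exact absurd (hW.2 _ h) hKne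
    · exact h
  refine ⟨c, fun v hv => ?_⟩
  rw [← hKeq] at hv
  have := hv.2
  simpa [LinearMap.mem_ker, sub_eq_zero] using this

/-- Every nonzero submodule contains a primitive vector. -/
lemma exists_primitive {W : LieSubmodule ℂ L2 V} (hW : W ≠ ⊥) :
    ∃ (m : V) (μ : ℂ), m ∈ W ∧ triple.HasPrimitiveVectorWith m μ := by
  obtain ⟨v₀, hv₀, hv₀0⟩ := exists_ne_zero_of_ne_bot hW
  have : Nontrivial W := nontrivial_of_ne ⟨v₀, hv₀⟩ 0 (by simpa using hv₀0)
  obtain ⟨μ₀, hμ₀⟩ := (toEnd ℂ L2 W HH).exists_eigenvalue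
  obtain ⟨w, hw⟩ := hμ₀.exists_hasEigenvector
  have hwH : ⁅HH, (w : V)⁆ = μ₀ • (w : V) := by
    have := hw.apply_eq_smul
    have h2 := congrArg (Subtype.val) this
    rw [toEnd_apply_apply] at h2
    rw [← LieSubmodule.coe_bracket]
    simpa using h2
  have hw0 : (w : V) ≠ 0 := by simpa using hw.2
  set ψ : ℕ → V := fun n => ((toEnd ℂ L2 V EE) ^ n) (w : V) with hψ
  have hsucc : ∀ n, ψ (n + 1) = ⁅EE, ψ n⁆ := by
    intro n
    rw [hψ]
    simp only [pow_succ', Module.End.mul_apply, toEnd_apply_apply]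
  have hmem : ∀ n, ψ n ∈ W := by
    intro n
    induction n with
    | zero => simpa [hψ] using w.2
    | succ n ih => rw [hsucc]; exact W.lie_mem ih
  have hh : ∀ n, ⁅HH, ψ n⁆ = (μ₀ + 2 * n) • ψ n := by
    intro n
    induction n with
    | zero => simpa [hψ] using hwH
    | succ n ih =>
      rw [hsucc, leibniz_lie, hHE, ih, lie_smul, smul_lie, ← hsucc, ← add_smul]
      congr 1
      push_cast
      ring
  have hex : ∃ n, ψ n = 0 := by
    have hs : (Set.range fun n : ℕ => μ₀ + 2 * n).Infinite := by
      rw [Set.infinite_range_iff (fun n m => by simp)]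
      infer_instance
    by_contra! contra
    exact hs (((toEnd ℂ L2 V HH).eigenvectors_linearIndependent
      {μ₀ + 2 * n | n : ℕ}
      (fun ⟨s, hs'⟩ => ψ (Classical.choose hs'))
      (fun ⟨r, hr⟩ => by
        simp [hh, Classical.choose_spec hr, contra,
          Module.End.hasEigenvector_iff, Module.End.mem_eigenspace_iff,
          toEnd_apply_apply])).finite)
  obtain ⟨n, hn₁, hn₂⟩ := Nat.exists_not_and_succ_of_not_zero_of_exists
    (p := fun n => ψ n = 0) (by simpa [hψ] using hw0) hex
  exact ⟨ψ n, μ₀ + 2 * n, hmem n,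
    { ne_zero := hn₁
      lie_h := hh n
      lie_e := by rw [← hsucc]; exact hn₂ }⟩

/-- Dichotomy for atoms: trivial action or nonzero Casimir scalar. -/
lemma atom_dichotomy {W : LieSubmodule ℂ L2 V} (hW : IsAtom W) :
    (∀ (x : L2), ∀ v ∈ W, ⁅x, v⁆ = 0) ∨
    (∃ c : ℂ, c ≠ 0 ∧ ∀ v ∈ W, cas V v = c • v) := by
  obtain ⟨c, hc⟩ := scalar_on_atom hW (cas V) cas_lie (fun v hv => cas_mem W hv)
  obtain ⟨m, μ, hmW, P⟩ := exists_primitive hW.1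
  obtain ⟨n, hn⟩ := P.exists_nat
  have hcasm : cas V m = (μ + 2⁻¹ * μ ^ 2) • m := by
    rw [cas_apply, P.lie_e, lie_zero, leibniz_lie, hEF, P.lie_h, lie_smul, P.lie_h, P.lie_e,
      lie_zero, add_zero, add_zero]
    match_scalars
    ring
  have hceq : c = μ + 2⁻¹ * μ ^ 2 := by
    have h1 : c • m = (μ + 2⁻¹ * μ ^ 2) • m := by rw [← hc m hmW, hcasm]
    have h2 : (c - (μ + 2⁻¹ * μ ^ 2)) • m = 0 := by rw [sub_smul, h1, sub_self]
    rcases smul_eq_zero.mp h2 with h | h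
    · exact sub_eq_zero.mp h
    · exact absurd h P.ne_zero
  by_cases hμ : μ = 0
  · left
    -- trivial case
    have hn0 : n = 0 := by
      have : ((n : ℂ)) = 0 := by rw [← hn, hμ]
      exact_mod_cast this
    have hFm : ⁅FF, m⁆ = 0 := by
      have := P.pow_toEnd_f_eq_zero_of_eq_nat (n := 0) (by rw [hn, hn0])
      simpa [toEnd_apply_apply] using this
    have hHm : ⁅HH, m⁆ = 0 := by rw [P.lie_h, hμ, zero_smul]
    have hallm : ∀ x : L2, ⁅x, m⁆ = 0 := act_zero_of_gen P.lie_e hFm hHm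
    set K : LieSubmodule ℂ L2 V :=
      { toSubmodule := Submodule.span ℂ {m}
        lie_mem := by
          intro x v hv
          obtain ⟨a, rfl⟩ := Submodule.mem_span_singleton.mp hv
          rw [lie_smul, hallm, smul_zero]
          exact Submodule.zero_mem _ } with hKdef
    have hKW : K ≤ W := by
      intro v hv
      obtain ⟨a, rfl⟩ := Submodule.mem_span_singleton.mp hv
      exact W.smul_mem a hmW
    have hKne : K ≠ ⊥ := by
      intro h
      apply P.ne_zero
      have : m ∈ K := Submodule.mem_span_singleton_self m
      rw [h] at this
      simpa using this
    have hKeq : K = W := by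
      rcases lt_or_eq_of_le hKW with h | h
      · exact absurd (hW.2 _ h) hKne
      · exact h
    intro x v hv
    rw [← hKeq] at hv
    obtain ⟨a, rfl⟩ := Submodule.mem_span_singleton.mp hv
    rw [lie_smul, hallm, smul_zero]
  · right
    refine ⟨c, ?_, hc⟩
    rw [hceq, hn]
    intro hzero
    have hn0 : (n : ℂ) ≠ 0 := by rw [← hn]; exact hμ
    have : (n : ℂ) * (1 + 2⁻¹ * n) = 0 := by ring_nf; ring_nf at hzero; linear_combination hzero
    rcases mul_eq_zero.mp this with h | h
    · exact hn0 h
    · have : (n : ℂ) = -2 := by linear_combination 2 * h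
      have : ((n + 2 : ℕ) : ℂ) = 0 := by push_cast; linear_combination this
      have : n + 2 = 0 := by exact_mod_cast this
      omega


end

universe u

lemma mk'_coe {V : Type u} [AddCommGroup V] [Module ℂ V] [LieRingModule L2 V] [LieModule ℂ L2 V]
    (W : LieSubmodule ℂ L2 V) :
    (LieSubmodule.Quotient.mk' W : V →ₗ[ℂ] V ⧸ W) = W.toSubmodule.mkQ := rfl

/-- Key inductive lemma: a Lie submodule of codimension one has a complement. -/
theorem codim_one_compl (k : ℕ) :
    ∀ (V : Type u) [AddCommGroup V] [Module ℂ V] [LieRingModule L2 V]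
      [LieModule ℂ L2 V] [FiniteDimensional ℂ V], finrank ℂ V ≤ k →
      ∀ W : LieSubmodule ℂ L2 V, finrank ℂ (V ⧸ W.toSubmodule) = 1 →
      ∃ X : LieSubmodule ℂ L2 V, W ⊓ X = ⊥ ∧ W ⊔ X = ⊤ := by
  induction k with
  | zero =>
    intro V _ _ _ _ _ hrk W hcodim
    have h1 := Submodule.finrank_quotient_add_finrank W.toSubmodule
    omega
  | succ k IH =>
    intro V _ _ _ _ _ hrk W hcodim
    by_cases hbot : W = ⊥
    · refine ⟨⊤, ?_, ?_⟩ <;> simp [hbot]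
    by_cases hatom : IsAtom W
    · -- atom case; first: all brackets land in W
      have hbr : ∀ (x : L2) (v : V), ⁅x, v⁆ ∈ W := by
        intro x v
        have htr : ∀ (y : L2) (q : V ⧸ W), ⁅y, q⁆ = 0 :=
          triv_of_finrank_one (V := V ⧸ W) hcodim
        have : LieSubmodule.Quotient.mk' W ⁅x, v⁆ = 0 := by
          rw [LieModuleHom.map_lie]
          exact htr x _
        exact (LieSubmodule.Quotient.mk_eq_zero W).mp this
      rcases atom_dichotomy hatom with htriv | ⟨c, hc0, hc⟩
      · -- trivial action on all of V
        have hall : ∀ (x : L2) (v : V), ⁅x, v⁆ = 0 := by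
          apply act_zero_of_lie_lie
          intro x y v
          exact htriv x _ (hbr y v)
        obtain ⟨p, hp⟩ := Submodule.exists_isCompl W.toSubmodule
        refine ⟨⟨p, ?_⟩, ?_, ?_⟩
        · intro x v _
          rw [hall]
          exact p.zero_mem
        · rw [← LieSubmodule.toSubmodule_inj, LieSubmodule.inf_toSubmodule,
            LieSubmodule.bot_toSubmodule]
          exact disjoint_iff.mp hp.disjoint
        · rw [← LieSubmodule.toSubmodule_inj, LieSubmodule.sup_toSubmodule,
            LieSubmodule.top_toSubmodule]
          exact codisjoint_iff.mp hp.codisjoint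
      · -- Casimir acts by nonzero scalar c on W
        set K : LieSubmodule ℂ L2 V :=
          { toSubmodule := LinearMap.ker (cas V)
            lie_mem := by
              intro x v hv
              have hv' : cas V v = 0 := LinearMap.mem_ker.mp hv
              refine LinearMap.mem_ker.mpr ?_
              rw [cas_lie, hv', lie_zero] } with hKdef
        have hinf : W ⊓ K = ⊥ := by
          rw [LieSubmodule.eq_bot_iff]
          intro v hv
          rw [LieSubmodule.mem_inf] at hv
          have h1 : cas V v = c • v := hc v hv.1
          have h2 : cas V v = 0 := LinearMap.mem_ker.mp hv.2
          rw [h2] at h1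
          exact (smul_eq_zero.mp h1.symm).resolve_left hc0
        refine ⟨K, hinf, ?_⟩
        have hrange : LinearMap.range (cas V) = W.toSubmodule := by
          apply le_antisymm
          · rintro _ ⟨v, rfl⟩
            rw [cas_apply]
            exact W.add_mem (W.add_mem (hbr _ _) (hbr _ _)) (W.smul_mem _ (hbr _ _))
          · intro w hw
            refine ⟨c⁻¹ • w, ?_⟩
            rw [map_smul, hc w hw, smul_smul, inv_mul_cancel₀ hc0, one_smul]
        have hrn := LinearMap.finrank_range_add_finrank_ker (cas V)
        rw [hrange] at hrn
        have hinf' : W.toSubmodule ⊓ K.toSubmodule = ⊥ := by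
          rw [← LieSubmodule.inf_toSubmodule, hinf, LieSubmodule.bot_toSubmodule]
        have hsupdim := Submodule.finrank_sup_add_finrank_inf_eq W.toSubmodule K.toSubmodule
        rw [hinf'] at hsupdim
        simp only [finrank_bot, add_zero] at hsupdim
        have hdim : finrank ℂ (W.toSubmodule ⊔ K.toSubmodule : Submodule ℂ V) = finrank ℂ V :=
          hsupdim.trans hrn
        rw [← LieSubmodule.toSubmodule_inj, LieSubmodule.sup_toSubmodule,
          LieSubmodule.top_toSubmodule]
        exact Submodule.eq_top_of_finrank_eq hdim
    · -- W is neither ⊥ nor an atom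
      obtain ⟨W', hW'atom, hW'le⟩ := (eq_bot_or_exists_atom_le W).resolve_left hbot
      have hW'lt : W' < W := lt_of_le_of_ne hW'le (by rintro rfl; exact hatom hW'atom)
      set Q := V ⧸ W' with hQdef
      set π := LieSubmodule.Quotient.mk' W' with hπdef
      set WQ := W.map π with hWQdef
      -- dimension bookkeeping
      have hW'pos : 0 < finrank ℂ W'.toSubmodule := by
        obtain ⟨v, hv, hv0⟩ := exists_ne_zero_of_ne_bot hW'atom.1
        have : Nontrivial W'.toSubmodule := nontrivial_of_ne ⟨v, hv⟩ 0 (by simpa using hv0)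
        exact finrank_pos
      have hQdim : finrank ℂ Q + finrank ℂ W'.toSubmodule = finrank ℂ V :=
        Submodule.finrank_quotient_add_finrank W'.toSubmodule
      have hQle : finrank ℂ Q ≤ k := by omega
      -- WQ has codimension 1 in Q
      have hWQto : WQ.toSubmodule = W.toSubmodule.map W'.toSubmodule.mkQ := by
        rw [hWQdef, LieSubmodule.toSubmodule_map, hπdef, mk'_coe]
      have hWQcodim : finrank ℂ (Q ⧸ WQ.toSubmodule) = 1 := by
        rw [hWQto]
        erw [(Submodule.quotientQuotientEquivQuotient W'.toSubmodule W.toSubmodule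
          hW'le).finrank_eq]
        exact hcodim
      obtain ⟨XQ, hXQinf, hXQsup⟩ := IH Q hQle WQ hWQcodim
      set U := XQ.comap π with hUdef
      have hmemU : ∀ v : V, v ∈ U ↔ π v ∈ XQ := fun v => Iff.rfl
      have hW'U : W' ≤ U := by
        intro v hv
        rw [hmemU]
        have : π v = 0 := (LieSubmodule.Quotient.mk_eq_zero W').mpr hv
        rw [this]
        exact XQ.zero_mem
      have hWUinf : W ⊓ U = W' := by
        apply le_antisymm
        · intro v hv
          rw [LieSubmodule.mem_inf] at hv
          have h1 : π v ∈ WQ := LieSubmodule.mem_map_of_mem hv.1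
          have h2 : π v ∈ WQ ⊓ XQ := (LieSubmodule.mem_inf _ _ _).mpr ⟨h1, hv.2⟩
          rw [hXQinf] at h2
          have : π v = 0 := by simpa using h2
          exact (LieSubmodule.Quotient.mk_eq_zero W').mp this
        · exact le_inf hW'le hW'U
      have hWUsup : W ⊔ U = ⊤ := by
        rw [eq_top_iff]
        intro v _
        have : π v ∈ WQ ⊔ XQ := by rw [hXQsup]; trivial
        rw [LieSubmodule.mem_sup] at this
        obtain ⟨q1, hq1, q2, hq2, hsum⟩ := this
        obtain ⟨w, hw, rfl⟩ := (LieSubmodule.mem_map _).mp hq1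
        have hvw : v - w ∈ U := by
          rw [hmemU, map_sub, ← hsum]
          simpa using hq2
        rw [LieSubmodule.mem_sup]
        exact ⟨w, hw, v - w, hvw, by abel⟩
      -- now work inside U
      set W'' : LieSubmodule ℂ L2 U := W'.comap U.incl with hW''def
      have hmemW'' : ∀ u : U, u ∈ W'' ↔ (u : V) ∈ W' := fun u => Iff.rfl
      -- the quotient U ⧸ W'' has dimension 1
      set g : U →ₗ[ℂ] Q := W'.toSubmodule.mkQ ∘ₗ U.toSubmodule.subtype with hgdef
      have hgker : LinearMap.ker g = W''.toSubmodule := by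
        ext u
        have hgu : g u = π (u : V) := rfl
        rw [LinearMap.mem_ker, hgu, LieSubmodule.Quotient.mk_eq_zero]
        exact (hmemW'' u).symm
      have hgrange : LinearMap.range g = XQ.toSubmodule := by
        rw [hgdef, LinearMap.range_comp, Submodule.range_subtype]
        have hUto : U.toSubmodule = Submodule.comap (W'.toSubmodule.mkQ) XQ.toSubmodule := by
          rw [hUdef, LieSubmodule.toSubmodule_comap, hπdef, mk'_coe]
        rw [hUto, Submodule.map_comap_eq, Submodule.range_mkQ, top_inf_eq]
      have hcomplQ : IsCompl WQ.toSubmodule XQ.toSubmodule := by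
        constructor
        · rw [disjoint_iff, ← LieSubmodule.inf_toSubmodule, hXQinf,
            LieSubmodule.bot_toSubmodule]
        · rw [codisjoint_iff, ← LieSubmodule.sup_toSubmodule, hXQsup,
            LieSubmodule.top_toSubmodule]
      have hXQdim : finrank ℂ XQ.toSubmodule = 1 := by
        rw [← (Submodule.quotientEquivOfIsCompl _ _ hcomplQ).finrank_eq]
        exact hWQcodim
      have hUcodim : finrank ℂ (U ⧸ W''.toSubmodule) = 1 := by
        have e1 := (LinearMap.quotKerEquivRange g).finrank_eq
        rw [hgker, hgrange] at e1
        rw [e1, hXQdim]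
      -- dimension of U is small enough
      have hW''dim : finrank ℂ W''.toSubmodule = finrank ℂ W'.toSubmodule := by
        have hW''to : W''.toSubmodule = Submodule.comap U.toSubmodule.subtype W'.toSubmodule := by
          rw [hW''def, LieSubmodule.toSubmodule_comap, LieSubmodule.incl_coe]
        have hle' : W'.toSubmodule ≤ U.toSubmodule := hW'U
        rw [hW''to]
        exact (Submodule.comapSubtypeEquivOfLe hle').finrank_eq
      have hWltV : finrank ℂ W.toSubmodule + 1 = finrank ℂ V := by
        have := Submodule.finrank_quotient_add_finrank W.toSubmodule
        omega
      have hW'ltW : finrank ℂ W'.toSubmodule < finrank ℂ W.toSubmodule := by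
        apply Submodule.finrank_lt_finrank_of_lt
        rw [lt_iff_le_not_ge] at hW'lt ⊢
        simpa only [LieSubmodule.toSubmodule_le_toSubmodule] using hW'lt
      have hq2 := Submodule.finrank_quotient_add_finrank W''.toSubmodule
      rw [hUcodim, hW''dim] at hq2
      have hUle : finrank ℂ ↥U ≤ k := by omega
      obtain ⟨X', hX'inf, hX'sup⟩ := IH ↥U hUle W'' hUcodim
      set X := X'.map U.incl with hXdef
      refine ⟨X, ?_, ?_⟩
      · rw [LieSubmodule.eq_bot_iff]
        intro v hv
        rw [LieSubmodule.mem_inf] at hv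
        obtain ⟨u, hu, rfl⟩ := (LieSubmodule.mem_map _).mp hv.2
        have huU : (U.incl u : V) ∈ U := by
          simpa using u.2
        have hvW' : (U.incl u : V) ∈ W' := by
          have : (U.incl u : V) ∈ W ⊓ U := (LieSubmodule.mem_inf _ _ _).mpr ⟨hv.1, huU⟩
          rwa [hWUinf] at this
        have huW'' : u ∈ W'' := by
          rw [hmemW'']
          simpa using hvW'
        have : u ∈ W'' ⊓ X' := (LieSubmodule.mem_inf _ _ _).mpr ⟨huW'', hu⟩
        rw [hX'inf] at this
        have : u = 0 := by simpa using this
        rw [this]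
        simp
      · rw [← top_le_iff, ← hWUsup]
        apply sup_le le_sup_left
        intro v hv
        have hvU : (⟨v, hv⟩ : U) ∈ (⊤ : LieSubmodule ℂ L2 U) := trivial
        rw [← hX'sup, LieSubmodule.mem_sup] at hvU
        obtain ⟨a, ha, b, hb, hab⟩ := hvU
        have hva : (a : V) ∈ W := hW'le ((hmemW'' a).mp ha)
        have hvb : (b : V) ∈ X := LieSubmodule.mem_map_of_mem hb
        rw [LieSubmodule.mem_sup]
        refine ⟨a, hva, b, hvb, ?_⟩
        have := congrArg (Subtype.val) hab
        simpa using this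

section
variable {V : Type u} [AddCommGroup V] [Module ℂ V] [LieRingModule L2 V] [LieModule ℂ L2 V]
  [FiniteDimensional ℂ V]

/-- Weyl's theorem for sl2: every Lie submodule has a complement. -/
theorem exists_lie_compl (W : LieSubmodule ℂ L2 V) :
    ∃ X : LieSubmodule ℂ L2 V, W ⊓ X = ⊥ ∧ W ⊔ X = ⊤ := by
  by_cases hbot : W = ⊥
  · exact ⟨⊤, by simp [hbot], by simp [hbot]⟩
  obtain ⟨w₀, hw₀, hw₀0⟩ := exists_ne_zero_of_ne_bot hbot
  -- maps which restrict to a scalar on W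
  set V1 : Submodule ℂ (V →ₗ[ℂ] ↥W) :=
    { carrier := {φ | ∃ a : ℂ, ∀ (w : V) (hw : w ∈ W), φ w = a • ⟨w, hw⟩}
      add_mem' := by
        rintro φ ψ ⟨a, ha⟩ ⟨b, hb⟩
        exact ⟨a + b, fun w hw => by
          rw [LinearMap.add_apply, ha w hw, hb w hw, add_smul]⟩
      zero_mem' := ⟨0, fun w hw => by rw [LinearMap.zero_apply, zero_smul]⟩
      smul_mem' := by
        rintro t φ ⟨a, ha⟩
        exact ⟨t * a, fun w hw => by
          rw [LinearMap.smul_apply, ha w hw, mul_smul]⟩ } with hV1def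
  have key_lie : ∀ (x : L2) (φ : V →ₗ[ℂ] ↥W), φ ∈ V1 → ∀ (w : V) (hw : w ∈ W), ⁅x, φ⁆ w = 0 := by
    rintro x φ ⟨a, ha⟩ w hw
    rw [LieHom.lie_apply, ha w hw, ha ⁅x, w⁆ (W.lie_mem hw), lie_smul]
    have : ⁅x, (⟨w, hw⟩ : ↥W)⁆ = (⟨⁅x, w⁆, W.lie_mem hw⟩ : ↥W) := by
      apply Subtype.ext
      exact LieSubmodule.coe_bracket W x ⟨w, hw⟩
    rw [this, sub_self]
  set 𝒱 : LieSubmodule ℂ L2 (V →ₗ[ℂ] ↥W) :=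
    { toSubmodule := V1
      lie_mem := fun {x φ} hφ => ⟨0, fun w hw => by rw [key_lie x φ hφ w hw, zero_smul]⟩ }
    with h𝒱def
  set 𝒲 : LieSubmodule ℂ L2 (V →ₗ[ℂ] ↥W) :=
    { toSubmodule :=
        { carrier := {φ | ∀ (w : V) (hw : w ∈ W), φ w = 0}
          add_mem' := fun hφ hψ => fun w hw => by
            rw [LinearMap.add_apply, hφ w hw, hψ w hw, add_zero]
          zero_mem' := fun w hw => rfl
          smul_mem' := fun t φ hφ => fun w hw => by
            rw [LinearMap.smul_apply, hφ w hw, smul_zero] }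
      lie_mem := by
        intro x φ hφ
        intro w hw
        rw [LieHom.lie_apply, hφ w hw, hφ ⁅x, w⁆ (W.lie_mem hw), lie_zero, sub_zero] }
    with h𝒲def
  have h𝒲𝒱 : ∀ φ : V →ₗ[ℂ] ↥W, φ ∈ 𝒲 → φ ∈ 𝒱 := by
    intro φ hφ
    exact ⟨0, fun w hw => by rw [hφ w hw, zero_smul]⟩
  set 𝒲' : LieSubmodule ℂ L2 ↥𝒱 := 𝒲.comap 𝒱.incl with h𝒲'def
  have hmem𝒲' : ∀ φ : ↥𝒱, φ ∈ 𝒲' ↔ (φ : V →ₗ[ℂ] ↥W) ∈ 𝒲 := fun φ => Iff.rfl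
  -- the evaluation map at w₀
  set ev : ↥𝒱 →ₗ[ℂ] ↥W :=
    { toFun := fun φ => (φ : V →ₗ[ℂ] ↥W) w₀
      map_add' := fun φ ψ => rfl
      map_smul' := fun t φ => rfl } with hevdef
  have hw₀W : (⟨w₀, hw₀⟩ : ↥W) ≠ 0 := by simpa using hw₀0
  have hevker : LinearMap.ker ev = 𝒲'.toSubmodule := by
    ext φ
    rw [LinearMap.mem_ker]
    show (φ : V →ₗ[ℂ] ↥W) w₀ = 0 ↔ φ ∈ 𝒲'
    constructor
    · intro h
      obtain ⟨a, ha⟩ := φ.2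
      have h0 : a • (⟨w₀, hw₀⟩ : ↥W) = 0 := by rw [← ha w₀ hw₀]; exact h
      have ha0 : a = 0 := (smul_eq_zero.mp h0).resolve_right hw₀W
      intro w hw
      show (φ : V →ₗ[ℂ] ↥W) w = 0
      rw [ha w hw, ha0, zero_smul]
    · intro h
      exact h w₀ hw₀
  -- a projection onto W gives an element with a = 1
  obtain ⟨p, hp⟩ := Submodule.exists_isCompl W.toSubmodule
  set proj : (V →ₗ[ℂ] ↥W) := W.toSubmodule.linearProjOfIsCompl p hp with hprojdef
  have hproj𝒱 : proj ∈ 𝒱 := by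
    refine ⟨1, fun w hw => ?_⟩
    rw [one_smul, hprojdef]
    exact Submodule.linearProjOfIsCompl_apply_left hp ⟨w, hw⟩
  have hevrange : LinearMap.range ev = Submodule.span ℂ {(⟨w₀, hw₀⟩ : ↥W)} := by
    apply le_antisymm
    · rintro _ ⟨φ, rfl⟩
      obtain ⟨a, ha⟩ := φ.2
      show (φ : V →ₗ[ℂ] ↥W) w₀ ∈ _
      rw [ha w₀ hw₀]
      exact Submodule.smul_mem _ _ (Submodule.mem_span_singleton_self _)
    · rw [Submodule.span_le, Set.singleton_subset_iff]
      refine ⟨⟨proj, hproj𝒱⟩, ?_⟩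
      show proj w₀ = _
      rw [hprojdef]
      exact Submodule.linearProjOfIsCompl_apply_left hp ⟨w₀, hw₀⟩
  have hcodim : finrank ℂ (↥𝒱 ⧸ 𝒲'.toSubmodule) = 1 := by
    rw [← hevker, (LinearMap.quotKerEquivRange ev).finrank_eq, hevrange]
    exact finrank_span_singleton hw₀W
  obtain ⟨X, hXinf, hXsup⟩ := codim_one_compl (finrank ℂ ↥𝒱) ↥𝒱 le_rfl 𝒲' hcodim
  -- X is nonzero
  have hXne : X ≠ ⊥ := by
    intro h
    rw [h, sup_bot_eq] at hXsup
    have h1 : 𝒲'.toSubmodule = ⊤ := by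
      rw [hXsup, LieSubmodule.top_toSubmodule]
    rw [h1] at hcodim
    have h2 := Submodule.finrank_quotient_add_finrank (⊤ : Submodule ℂ ↥𝒱)
    rw [finrank_top] at h2
    omega
  obtain ⟨φ', hφ'X, hφ'0⟩ := exists_ne_zero_of_ne_bot hXne
  -- φ' is equivariant
  have hbr : ∀ x : L2, ⁅x, φ'⁆ = (0 : ↥𝒱) := by
    intro x
    have h1 : ⁅x, φ'⁆ ∈ X := X.lie_mem hφ'X
    have h2 : ⁅x, φ'⁆ ∈ 𝒲' := by
      rw [hmem𝒲']
      have hcoe : ((⁅x, φ'⁆ : ↥𝒱) : V →ₗ[ℂ] ↥W) = ⁅x, (φ' : V →ₗ[ℂ] ↥W)⁆ := LieSubmodule.coe_bracket 𝒱 x φ'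
      rw [hcoe]
      intro w hw
      exact key_lie x _ φ'.2 w hw
    have : ⁅x, φ'⁆ ∈ 𝒲' ⊓ X := (LieSubmodule.mem_inf _ _ _).mpr ⟨h2, h1⟩
    rw [hXinf] at this
    simpa using this
  obtain ⟨a, ha⟩ := φ'.2
  have ha0 : a ≠ 0 := by
    intro h
    apply hφ'0
    have hφ'𝒲 : φ' ∈ 𝒲' := by
      rw [hmem𝒲']
      intro w hw
      rw [ha w hw, h, zero_smul]
    have : φ' ∈ 𝒲' ⊓ X := (LieSubmodule.mem_inf _ _ _).mpr ⟨hφ'𝒲, hφ'X⟩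
    rw [hXinf] at this
    simpa using this
  set ψ : (V →ₗ[ℂ] ↥W) := a⁻¹ • (φ' : V →ₗ[ℂ] ↥W) with hψdef
  have hψW : ∀ (w : V) (hw : w ∈ W), ψ w = ⟨w, hw⟩ := by
    intro w hw
    show a⁻¹ • ((φ' : V →ₗ[ℂ] ↥W) w) = _
    rw [ha w hw, smul_smul, inv_mul_cancel₀ ha0, one_smul]
  have hψeq : ∀ (x : L2) (v : V), ⁅x, ψ v⁆ = ψ ⁅x, v⁆ := by
    intro x v
    have h0 : ⁅x, (φ' : V →ₗ[ℂ] ↥W)⁆ = 0 := by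
      have := congrArg (Subtype.val) (hbr x)
      rwa [LieSubmodule.coe_bracket] at this
    have h1 : ⁅x, ψ⁆ = 0 := by
      rw [hψdef, lie_smul a⁻¹ x ((φ' : V →ₗ[ℂ] ↥W) : V →ₗ[ℂ] ↥W), h0, smul_zero]
    have := congrArg (fun f : V →ₗ[ℂ] ↥W => f v) h1
    simp only [LieHom.lie_apply, LinearMap.zero_apply] at this
    exact sub_eq_zero.mp this
  set X₀ : LieSubmodule ℂ L2 V :=
    { toSubmodule := LinearMap.ker ψ
      lie_mem := by
        intro x v hv
        have hv' : ψ v = 0 := LinearMap.mem_ker.mp hv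
        refine LinearMap.mem_ker.mpr ?_
        rw [← hψeq, hv', lie_zero] }
  refine ⟨X₀, ?_, ?_⟩
  · rw [LieSubmodule.eq_bot_iff]
    intro v hv
    rw [LieSubmodule.mem_inf] at hv
    have h1 : ψ v = ⟨v, hv.1⟩ := hψW v hv.1
    have h2 : ψ v = 0 := LinearMap.mem_ker.mp hv.2
    rw [h2] at h1
    have := congrArg Subtype.val h1.symm
    simpa using this
  · rw [eq_top_iff]
    intro v _
    rw [LieSubmodule.mem_sup]
    refine ⟨((ψ v : ↥W) : V), (ψ v).2, v - ((ψ v : ↥W) : V), ?_, by abel⟩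
    refine LinearMap.mem_ker.mpr ?_
    rw [map_sub]
    have h3 : ψ (((ψ v : ↥W) : V)) = ψ v := by
      rw [hψW _ (ψ v).2]
    rw [h3, sub_self]

end

end
end Sl2Weyl

open LieAlgebra.SpecialLinear Sl2Weyl

/-- Every finite-dimensional representation of the complex Lie algebra `sl₂` is
completely reducible, i.e. a direct sum of irreducible subrepresentations. -/
theorem stmt_13 {V : Type*} [AddCommGroup V] [Module ℂ V] [FiniteDimensional ℂ V]
    [LieRingModule (sl (Fin 2) ℂ) V] [LieModule ℂ (sl (Fin 2) ℂ) V] :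
    ∃ (n : ℕ) (W : Fin n → LieSubmodule ℂ (sl (Fin 2) ℂ) V),
      ((⨆ i, W i) = ⊤) ∧
      (∀ i, W i ⊓ (⨆ j ∈ ({i}ᶜ : Set (Fin n)), W j) = ⊥) ∧
      (∀ i, W i ≠ ⊥ ∧
        ∀ N : LieSubmodule ℂ (sl (Fin 2) ℂ) V, N ≤ W i → N = ⊥ ∨ N = W i) := by
  classical
  haveI : ComplementedLattice (LieSubmodule ℂ (sl (Fin 2) ℂ) V) :=
    ⟨fun W => by
      obtain ⟨X, h1, h2⟩ := exists_lie_compl W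
      exact ⟨X, disjoint_iff.mpr h1, codisjoint_iff.mpr h2⟩⟩
  have htop : sSup {a : LieSubmodule ℂ (sl (Fin 2) ℂ) V | IsAtom a} = ⊤ := sSup_atoms_eq_top
  obtain ⟨s, hind, hsup, hatoms⟩ := exists_sSupIndep_of_sSup_atoms_eq_top htop
  have hfin : s.Finite := WellFoundedGT.finite_of_sSupIndep hind
  haveI : Fintype s := hfin.fintype
  set e : Fin (Fintype.card s) ≃ s := (Fintype.equivFin s).symm with hedef
  refine ⟨Fintype.card s, fun i => ((e i : s) : LieSubmodule ℂ (sl (Fin 2) ℂ) V), ?_, ?_, ?_⟩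
  · rw [e.surjective.iSup_comp (g := fun a : s => (a : LieSubmodule ℂ (sl (Fin 2) ℂ) V)),
      ← sSup_eq_iSup']
    exact hsup
  · intro i
    have hd : Disjoint ((e i : s) : LieSubmodule ℂ (sl (Fin 2) ℂ) V)
        (sSup (s \ {((e i : s) : LieSubmodule ℂ (sl (Fin 2) ℂ) V)})) := hind (e i).2
    have hle : (⨆ j ∈ ({i}ᶜ : Set (Fin (Fintype.card s))),
        ((e j : s) : LieSubmodule ℂ (sl (Fin 2) ℂ) V)) ≤
        sSup (s \ {((e i : s) : LieSubmodule ℂ (sl (Fin 2) ℂ) V)}) := by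
      refine iSup₂_le fun j hj => ?_
      apply le_sSup
      refine ⟨(e j).2, ?_⟩
      intro heq
      apply Set.mem_compl_singleton_iff.mp hj
      apply e.injective
      apply Subtype.val_injective
      simpa using heq
    exact disjoint_iff.mp (hd.mono_right hle)
  · intro i
    have h := hatoms (e i).2
    refine ⟨h.1, fun N hN => ?_⟩
    rcases eq_or_lt_of_le hN with heq | hlt
    · exact Or.inr heq
    · exact Or.inl (h.2 N hlt)
end

section
/- If α and β are roots of a root system with β ≠ ±α, and E_α, F_α, H_α is the sl₂-triple for α acting on V = ⊕_{m∈ℤ} 𝔤_{β+mα}, then the set of integers m for which β + mα is a root forms an unbroken interval [−p, q] with p, q ≥ 0 and p − q = 2(α,β)/(α,α); in particular 2(α,β)/(α,α) ∈ ℤ and β − (2(α,β)/(α,α))α is a root. -/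
section
variable {V : Type*} [NormedAddCommGroup V] [InnerProductSpace ℝ V]

lemma lemA (Φ : Set V) (h0 : (0 : V) ∉ Φ)
    (hrefl : ∀ α ∈ Φ, ∀ β ∈ Φ,
      β - (2 * (inner ℝ α β : ℝ) / (inner ℝ α α : ℝ)) • α ∈ Φ)
    (hint : ∀ α ∈ Φ, ∀ β ∈ Φ, ∃ n : ℤ, (n : ℝ) = 2 * (inner ℝ α β : ℝ) / (inner ℝ α α : ℝ))
    (hred : ∀ α ∈ Φ, ∀ t : ℝ, t • α ∈ Φ → t = 1 ∨ t = -1)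
    {γ δ : V} (hγ : γ ∈ Φ) (hδ : δ ∈ Φ) (hlt : (inner ℝ γ δ : ℝ) < 0) (hne : γ ≠ -δ) :
    γ + δ ∈ Φ := by
  have hγ0 : γ ≠ 0 := fun h => h0 (h ▸ hγ)
  have hδ0 : δ ≠ 0 := fun h => h0 (h ▸ hδ)
  have hδn : (0:ℝ) < ‖δ‖ := norm_pos_iff.mpr hδ0
  have hγn : (0:ℝ) < ‖γ‖ := norm_pos_iff.mpr hγ0
  have hγγ : (0:ℝ) < inner ℝ γ γ := by
    rw [real_inner_self_eq_norm_sq]; exact pow_pos hγn 2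
  have hδδ : (0:ℝ) < inner ℝ δ δ := by
    rw [real_inner_self_eq_norm_sq]; exact pow_pos hδn 2
  -- strict Cauchy-Schwarz
  have hnp : ‖-δ‖ • γ ≠ ‖γ‖ • (-δ) := by
    intro h
    have hh : γ = (-(‖γ‖/‖δ‖)) • δ := by
      apply smul_right_injective V (ne_of_gt hδn)
      rw [norm_neg, smul_neg] at h
      show ‖δ‖ • γ = ‖δ‖ • (-(‖γ‖ / ‖δ‖) • δ)
      rw [h, smul_smul, ← neg_smul]
      congr 1
      field_simp
    rcases hred δ hδ _ (hh ▸ hγ) with h1 | h1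
    · have : (0:ℝ) < ‖γ‖ / ‖δ‖ := div_pos hγn hδn
      linarith
    · apply hne
      rw [hh, show -(‖γ‖ / ‖δ‖) = (-1 : ℝ) by linarith]
      simp
  have hcs : (inner ℝ γ (-δ) : ℝ) < ‖γ‖ * ‖-δ‖ := inner_lt_norm_mul_iff_real.mpr hnp
  have hsq : (inner ℝ γ δ : ℝ) ^ 2 < (inner ℝ γ γ : ℝ) * (inner ℝ δ δ : ℝ) := by
    rw [inner_neg_right, norm_neg] at hcs
    have h1 : (inner ℝ γ γ : ℝ) = ‖γ‖ ^ 2 := real_inner_self_eq_norm_sq γ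
    have h2 : (inner ℝ δ δ : ℝ) = ‖δ‖ ^ 2 := real_inner_self_eq_norm_sq δ
    nlinarith [norm_nonneg γ, norm_nonneg δ]
  obtain ⟨a, ha⟩ := hint γ hγ δ hδ
  obtain ⟨b, hb⟩ := hint δ hδ γ hγ
  have hsym : (inner ℝ δ γ : ℝ) = inner ℝ γ δ := real_inner_comm γ δ
  rw [hsym] at hb
  have hab : (a:ℝ) * b < 4 := by
    rw [ha, hb, div_mul_div_comm, div_lt_iff₀ (by positivity)]
    nlinarith
  have ha0 : (a:ℝ) < 0 := by
    rw [ha]; apply div_neg_of_neg_of_pos _ hγγ; linarith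
  have hb0 : (b:ℝ) < 0 := by
    rw [hb]; apply div_neg_of_neg_of_pos _ hδδ; linarith
  have ha0' : a ≤ -1 := by
    have h' : a < 0 := by exact_mod_cast ha0
    omega
  have hb0' : b ≤ -1 := by
    have h' : b < 0 := by exact_mod_cast hb0
    omega
  have hab' : a * b < 4 := by exact_mod_cast hab
  have : a = -1 ∨ b = -1 := by
    by_contra h
    push_neg at h
    have h1 : a ≤ -2 := by omega
    have h2 : b ≤ -2 := by omega
    nlinarith
  rcases this with h | h
  · have := hrefl γ hγ δ hδ
    rw [← ha, h] at this
    simpa [add_comm] using this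
  · have := hrefl δ hδ γ hγ
    rw [hsym, ← hb, h] at this
    simpa [add_comm] using this

end

/-- (Root strings) If `α` and `β` are roots of a root system with `β ≠ ±α`, then the set
of integers `m` for which `β + mα` is a root forms an unbroken interval `[−p, q]` with
`p, q ≥ 0` and `p − q = 2(α,β)/(α,α)`; in particular `2(α,β)/(α,α) ∈ ℤ` and
`β − (2(α,β)/(α,α))α` is a root. -/
theorem stmt_15 {V : Type*} [NormedAddCommGroup V] [InnerProductSpace ℝ V]
    [FiniteDimensional ℝ V]
    (Φ : Set V) (hfin : Φ.Finite) (h0 : (0 : V) ∉ Φ)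
    (hspan : Submodule.span ℝ Φ = ⊤)
    (hrefl : ∀ α ∈ Φ, ∀ β ∈ Φ,
      β - (2 * (inner ℝ α β : ℝ) / (inner ℝ α α : ℝ)) • α ∈ Φ)
    (hint : ∀ α ∈ Φ, ∀ β ∈ Φ, ∃ n : ℤ, (n : ℝ) = 2 * (inner ℝ α β : ℝ) / (inner ℝ α α : ℝ))
    (hred : ∀ α ∈ Φ, ∀ t : ℝ, t • α ∈ Φ → t = 1 ∨ t = -1)
    (α β : V) (hα : α ∈ Φ) (hβ : β ∈ Φ) (hβα : β ≠ α) (hβα' : β ≠ -α) :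
    ∃ n : ℤ, (n : ℝ) = 2 * (inner ℝ α β : ℝ) / (inner ℝ α α : ℝ) ∧
      (∃ p q : ℕ, {m : ℤ | β + (m : ℝ) • α ∈ Φ} = Set.Icc (-(p : ℤ)) (q : ℤ) ∧
        (p : ℤ) - q = n) ∧
      β - (n : ℝ) • α ∈ Φ := by
  have hα0 : α ≠ 0 := fun h => h0 (h ▸ hα)
  have hαα : (0:ℝ) < inner ℝ α α := by
    rw [real_inner_self_eq_norm_sq]
    exact pow_pos (norm_pos_iff.mpr hα0) 2
  have hneg : ∀ γ ∈ Φ, -γ ∈ Φ := by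
    intro γ hγ
    have hγ0 : γ ≠ 0 := fun h => h0 (h ▸ hγ)
    have hγγ : (0:ℝ) < inner ℝ γ γ := by
      rw [real_inner_self_eq_norm_sq]
      exact pow_pos (norm_pos_iff.mpr hγ0) 2
    have h2 : 2 * (inner ℝ γ γ : ℝ) / (inner ℝ γ γ : ℝ) = 2 := by
      field_simp
    have := hrefl γ hγ γ hγ
    rw [h2] at this
    have he : γ - (2:ℝ) • γ = -γ := by module
    rwa [he] at this
  -- no root is a multiple t•α with t ∉ {1,-1}; in particular:
  have hβmul : ∀ t : ℝ, β ≠ t • α := by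
    intro t he
    rcases hred α hα t (he ▸ hβ) with h | h
    · exact hβα (by rw [he, h, one_smul])
    · exact hβα' (by rw [he, h, neg_one_smul])
  set S : Set ℤ := {m : ℤ | β + (m : ℝ) • α ∈ Φ} with hSdef
  have hSfin : S.Finite := by
    apply Set.Finite.preimage _ hfin
    intro a _ b _ hab
    simp only at hab
    have : ((a:ℤ):ℝ) • α = ((b:ℤ):ℝ) • α := by
      have := sub_eq_zero.mpr hab
      rw [show β + (a:ℝ) • α - (β + (b:ℝ) • α) = (a:ℝ) • α - (b:ℝ) • α by module,
        sub_eq_zero] at this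
      exact this
    have := smul_left_injective ℝ hα0 this
    exact_mod_cast this
  have h0S : (0:ℤ) ∈ S := by
    simp only [hSdef, Set.mem_setOf_eq, Int.cast_zero, zero_smul, add_zero]
    exact hβ
  set F : Finset ℤ := hSfin.toFinset with hF
  have hFne : F.Nonempty := ⟨0, hSfin.mem_toFinset.mpr h0S⟩
  set m' : ℤ := F.min' hFne with hm'
  set q' : ℤ := F.max' hFne with hq'
  have hm'S : m' ∈ S := hSfin.mem_toFinset.mp (F.min'_mem hFne)
  have hq'S : q' ∈ S := hSfin.mem_toFinset.mp (F.max'_mem hFne)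
  have hminle : ∀ m ∈ S, m' ≤ m := fun m hm => F.min'_le m (hSfin.mem_toFinset.mpr hm)
  have hmaxle : ∀ m ∈ S, m ≤ q' := fun m hm => F.le_max' m (hSfin.mem_toFinset.mpr hm)
  have hm'0 : m' ≤ 0 := hminle 0 h0S
  have hq'0 : 0 ≤ q' := hmaxle 0 h0S
  -- key membership helper : adding ±1 along the string
  -- the string is unbroken
  have hIcc : S = Set.Icc m' q' := by
    apply Set.eq_of_subset_of_subset
    · intro m hm; exact ⟨hminle m hm, hmaxle m hm⟩
    · intro m hm
      obtain ⟨h1, h2⟩ := hm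
      by_contra hmS
      -- r : largest element of S below m
      have hm'm : m' < m := lt_of_le_of_ne h1 (fun h => hmS (h ▸ hm'S))
      have hq'm : m < q' := lt_of_le_of_ne h2 (fun h => hmS (h ▸ hq'S))
      set T1 : Finset ℤ := F.filter (fun x => x < m) with hT1
      have hT1ne : T1.Nonempty :=
        ⟨m', Finset.mem_filter.mpr ⟨hSfin.mem_toFinset.mpr hm'S, hm'm⟩⟩
      set r : ℤ := T1.max' hT1ne with hr
      have hrS : r ∈ S := by
        have := T1.max'_mem hT1ne
        rw [Finset.mem_filter] at this
        exact hSfin.mem_toFinset.mp this.1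
      have hrm : r < m := (Finset.mem_filter.mp (T1.max'_mem hT1ne)).2
      have hr1 : r + 1 ∉ S := by
        intro hc
        rcases lt_or_eq_of_le (Int.add_one_le_iff.mpr hrm) with h | h
        · have : r + 1 ≤ r := T1.le_max' _ (Finset.mem_filter.mpr
            ⟨hSfin.mem_toFinset.mpr hc, h⟩)
          omega
        · exact hmS (h ▸ hc)
      -- s : smallest element of S above m
      set T2 : Finset ℤ := F.filter (fun x => m < x) with hT2
      have hT2ne : T2.Nonempty :=
        ⟨q', Finset.mem_filter.mpr ⟨hSfin.mem_toFinset.mpr hq'S, hq'm⟩⟩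
      set s : ℤ := T2.min' hT2ne with hs
      have hsS : s ∈ S := by
        have := T2.min'_mem hT2ne
        rw [Finset.mem_filter] at this
        exact hSfin.mem_toFinset.mp this.1
      have hms : m < s := (Finset.mem_filter.mp (T2.min'_mem hT2ne)).2
      have hs1 : s - 1 ∉ S := by
        intro hc
        rcases lt_or_eq_of_le (Int.add_one_le_iff.mpr hms) with h | h
        · have : s ≤ s - 1 := T2.min'_le _ (Finset.mem_filter.mpr
            ⟨hSfin.mem_toFinset.mpr hc, by omega⟩)
          omega
        · have he : s - 1 = m := by omega
          exact hmS (he ▸ hc)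
      -- inner product computations
      have hge : (0:ℝ) ≤ inner ℝ α β + (r:ℝ) * inner ℝ α α := by
        by_contra hc
        push_neg at hc
        have hrΦ : β + (r:ℝ) • α ∈ Φ := hrS
        have hlt' : (inner ℝ (β + (r:ℝ) • α) α : ℝ) < 0 := by
          rw [real_inner_comm, inner_add_right, real_inner_smul_right]
          exact hc
        have hneab : β + (r:ℝ) • α ≠ -α := by
          intro he
          have h' := eq_sub_of_add_eq he
          rw [show -α - (r:ℝ) • α = (-(r:ℝ) - 1) • α from by module] at h'
          exact hβmul _ h'
        have hmem := lemA Φ h0 hrefl hint hred hrΦ hα hlt' hneab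
        apply hr1
        show β + ((r + 1 : ℤ):ℝ) • α ∈ Φ
        have heq : β + ((r + 1 : ℤ):ℝ) • α = (β + (r:ℝ) • α) + α := by
          push_cast; module
        rw [heq]; exact hmem
      have hle : inner ℝ α β + (s:ℝ) * inner ℝ α α ≤ (0:ℝ) := by
        by_contra hc
        push_neg at hc
        have hsΦ : β + (s:ℝ) • α ∈ Φ := hsS
        have hlt' : (inner ℝ (β + (s:ℝ) • α) (-α) : ℝ) < 0 := by
          rw [inner_neg_right, real_inner_comm, inner_add_right, real_inner_smul_right]
          linarith
        have hneab : β + (s:ℝ) • α ≠ -(-α) := by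
          intro he
          rw [neg_neg] at he
          have h' := eq_sub_of_add_eq he
          rw [show α - (s:ℝ) • α = (1 - (s:ℝ)) • α from by module] at h'
          exact hβmul _ h'
        have hmem := lemA Φ h0 hrefl hint hred hsΦ (hneg α hα) hlt' hneab
        apply hs1
        show β + ((s - 1 : ℤ):ℝ) • α ∈ Φ
        have heq : β + ((s - 1 : ℤ):ℝ) • α = (β + (s:ℝ) • α) + -α := by
          push_cast; module
        rw [heq]; exact hmem
      have hrs : (r:ℝ) < (s:ℝ) := by exact_mod_cast lt_trans hrm hms
      nlinarith
  -- the integer n and the reflection symmetry of the string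
  obtain ⟨n, hn⟩ := hint α hα β hβ
  have hn' : (n:ℝ) * (inner ℝ α α : ℝ) = 2 * inner ℝ α β := by
    rw [hn]; field_simp
  have hstr : ∀ m ∈ S, -n - m ∈ S := by
    intro m hm
    have hmem := hrefl α hα (β + (m:ℝ) • α) hm
    have hco : 2 * (inner ℝ α (β + (m:ℝ) • α) : ℝ) / (inner ℝ α α : ℝ) = (n:ℝ) + 2 * m := by
      rw [inner_add_right, real_inner_smul_right, div_eq_iff (ne_of_gt hαα)]
      linear_combination -hn'
    rw [hco] at hmem
    show β + ((-n - m : ℤ):ℝ) • α ∈ Φ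
    have heq : β + ((-n - m : ℤ):ℝ) • α = (β + (m:ℝ) • α) - ((n:ℝ) + 2 * m) • α := by
      push_cast; module
    rw [heq]; exact hmem
  have hq'' : m' ≤ -n - q' := hminle _ (hstr q' hq'S)
  have hm'' : -n - m' ≤ q' := hmaxle _ (hstr m' hm'S)
  refine ⟨n, hn, ⟨(-m').toNat, q'.toNat, ?_, ?_⟩, ?_⟩
  · have e1 : (((-m').toNat : ℤ)) = -m' := Int.toNat_of_nonneg (by omega)
    have e2 : ((q'.toNat : ℤ)) = q' := Int.toNat_of_nonneg hq'0
    rw [hIcc, e1, e2, neg_neg]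
  · have e1 : (((-m').toNat : ℤ)) = -m' := Int.toNat_of_nonneg (by omega)
    have e2 : ((q'.toNat : ℤ)) = q' := Int.toNat_of_nonneg hq'0
    omega
  · rw [hn]; exact hrefl α hα β hβ
end

section
/- (Poincaré–Birkhoff–Witt) Let 𝔤 be a Lie algebra over a field with ordered basis X₁, X₂, …. Then the ordered monomials X_{i₁} X_{i₂} ⋯ X_{i_k} with i₁ ≤ i₂ ≤ ⋯ ≤ i_k form a basis of the universal enveloping algebra U(𝔤). -/
open UniversalEnvelopingAlgebra

namespace PBW

attribute [local instance] LieRing.ofAssociativeRing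

variable {K : Type*} [Field K] {L : Type*} [LieRing L] [LieAlgebra K L]
  {B : Type*} [LinearOrder B]

abbrev SL (B : Type*) [LinearOrder B] := {l : List B // l.Pairwise (· ≤ ·)}

abbrev V (K : Type*) (B : Type*) [Field K] [LinearOrder B] : Type _ := SL B →₀ K

def ins (i : B) (l : List B) : List B := List.orderedInsert (· ≤ ·) i l

lemma ins_length (i : B) (l : List B) : (ins i l).length = l.length + 1 :=
  List.orderedInsert_length _ _ _

lemma ins_sorted {l : List B} (i : B) (h : l.Pairwise (· ≤ ·)) : (ins i l).Pairwise (· ≤ ·) :=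
  List.Pairwise.orderedInsert i l h

lemma ins_nil (i : B) : ins i ([] : List B) = [i] := rfl

lemma ins_cons_of_le {i j : B} (t : List B) (h : i ≤ j) : ins i (j :: t) = i :: j :: t := by
  simp [ins, List.orderedInsert, h]

lemma ins_cons_of_gt {i j : B} (t : List B) (h : ¬ i ≤ j) : ins i (j :: t) = j :: ins i t := by
  simp [ins, List.orderedInsert, h]

lemma mem_ins {a i : B} {l : List B} : a ∈ ins i l ↔ a = i ∨ a ∈ l :=
  List.mem_orderedInsert _

lemma sorted_cons_ins {i j : B} {t : List B} (hs : (j :: t).Pairwise (· ≤ ·)) (h : ¬ i ≤ j) :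
    (j :: ins i t).Pairwise (· ≤ ·) := by
  rw [List.pairwise_cons] at hs ⊢
  refine ⟨fun b hb => ?_, ins_sorted i hs.2⟩
  rcases mem_ins.mp hb with rfl | hb
  · exact le_of_lt (lt_of_not_ge h)
  · exact hs.1 b hb

noncomputable def zS (l : List B) : V K B :=
  if h : l.Pairwise (· ≤ ·) then Finsupp.single ⟨l, h⟩ 1 else 0

lemma zS_eq_single {l : List B} (h : l.Pairwise (· ≤ ·)) :
    (zS l : V K B) = Finsupp.single ⟨l, h⟩ 1 := dif_pos h

noncomputable def Wk (K : Type*) (B : Type*) [Field K] [LinearOrder B] (k : ℕ) :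
    Submodule K (V K B) :=
  Finsupp.supported K K {ν : SL B | ν.1.length ≤ k}

lemma Wk_mono {k k' : ℕ} (h : k ≤ k') : Wk K B k ≤ Wk K B k' :=
  Finsupp.supported_mono (fun _ hν => le_trans hν h)

lemma zS_mem {k : ℕ} {l : List B} (h : l.length ≤ k) : (zS l : V K B) ∈ Wk K B k := by
  unfold zS
  split
  · exact Finsupp.single_mem_supported K 1 h
  · exact Submodule.zero_mem _

lemma mem_Wk_iff {v : V K B} {k : ℕ} :
    v ∈ Wk K B k ↔ ∀ ν ∈ v.support, (ν : SL B).1.length ≤ k := by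
  rfl

variable (X : Module.Basis B K L)

/-- fuelled straightening action of basis elements on `V` -/
noncomputable def acta : ℕ → B → List B → V K B
  | 0, _, _ => 0
  | _+1, i, [] => zS [i]
  | n+1, i, j :: t =>
    if i ≤ j then zS (i :: j :: t)
    else zS (j :: ins i t)
      + (acta n i t - zS (ins i t)).sum (fun ν c => c • acta n j ν.1)
      + (X.repr ⁅X i, X j⁆).sum (fun b c => c • acta n b t)

lemma acta_inv (n : ℕ) : ∀ (i : B) (l : List B), l.Pairwise (· ≤ ·) → l.length < n →
    acta X n i l - zS (ins i l) ∈ Wk K B l.length := by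
  induction n with
  | zero => intro i l _ h; omega
  | succ n IH =>
    have mem : ∀ (b : B) (m : List B), m.Pairwise (· ≤ ·) → m.length < n →
        acta X n b m ∈ Wk K B (m.length + 1) := by
      intro b m hm hlen
      have h1 := IH b m hm hlen
      have h2 : (zS (ins b m) : V K B) ∈ Wk K B (m.length + 1) :=
        zS_mem (by rw [ins_length])
      have h3 := Submodule.add_mem _ (Wk_mono (Nat.le_succ _) h1) h2
      simpa using h3
    intro i l hs hl
    match l with
    | [] => simpa [acta, ins_nil] using Submodule.zero_mem _
    | j :: t =>
      have hts : t.Pairwise (· ≤ ·) := hs.of_cons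
      have htl : t.length < n := by simpa using hl
      by_cases hij : i ≤ j
      · simp only [acta, if_pos hij, ins_cons_of_le t hij, sub_self]
        exact Submodule.zero_mem _
      · simp only [acta, if_neg hij, ins_cons_of_gt t hij]
        rw [add_assoc, add_sub_cancel_left]
        refine Submodule.add_mem _ ?_ ?_
        · rw [Finsupp.sum]
          refine Submodule.sum_mem _ (fun ν hν => ?_)
          have hνlen : ν.1.length ≤ t.length := mem_Wk_iff.mp (IH i t hts htl) ν hν
          refine Submodule.smul_mem _ _ ?_
          have := mem j ν.1 ν.2 (lt_of_le_of_lt hνlen htl)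
          exact Wk_mono (by simpa using Nat.add_le_add_right hνlen 1) this
        · rw [Finsupp.sum]
          refine Submodule.sum_mem _ (fun b hb => ?_)
          exact Submodule.smul_mem _ _ (by simpa using mem b t hts htl)

lemma acta_stab (n : ℕ) : ∀ (i : B) (l : List B), l.Pairwise (· ≤ ·) → l.length < n →
    acta X (n + 1) i l = acta X n i l := by
  induction n with
  | zero => intro i l _ h; omega
  | succ n IH =>
    intro i l hs hl
    match l with
    | [] => rfl
    | j :: t =>
      have hts : t.Pairwise (· ≤ ·) := hs.of_cons
      have htl : t.length < n := by simpa using hl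
      by_cases hij : i ≤ j
      · simp only [acta, if_pos hij]
      · simp only [acta, if_neg hij]
        rw [IH i t hts htl]
        congr 1
        congr 1
        · refine Finsupp.sum_congr (fun ν hν => ?_)
          have hνlen : ν.1.length ≤ t.length :=
            mem_Wk_iff.mp (acta_inv X n i t hts htl) ν hν
          rw [IH j ν.1 ν.2 (lt_of_le_of_lt hνlen htl)]
        · refine Finsupp.sum_congr (fun b _ => ?_)
          rw [IH b t hts htl]

/-- the straightening action -/
noncomputable def act (i : B) (l : List B) : V K B := acta X (l.length + 1) i l

lemma acta_eq_act {n : ℕ} {i : B} {l : List B} (hs : l.Pairwise (· ≤ ·)) (h : l.length < n) :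
    acta X n i l = act X i l := by
  induction n with
  | zero => omega
  | succ n IH =>
    by_cases h' : l.length < n
    · rw [acta_stab X n i l hs h', IH h']
    · have : l.length = n := by omega
      subst this; rfl

lemma act_nil (i : B) : act X i [] = zS [i] := rfl

lemma act_cons_le {i j : B} (t : List B) (h : i ≤ j) : act X i (j :: t) = zS (i :: j :: t) := by
  show acta X (t.length + 1 + 1) i (j :: t) = _
  simp only [acta, if_pos h]

lemma act_inv {i : B} {l : List B} (hs : l.Pairwise (· ≤ ·)) :
    act X i l - zS (ins i l) ∈ Wk K B l.length :=
  acta_inv X (l.length + 1) i l hs (lt_add_one _)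

lemma act_mem {i : B} {l : List B} (hs : l.Pairwise (· ≤ ·)) :
    act X i l ∈ Wk K B (l.length + 1) := by
  have h1 := Wk_mono (Nat.le_succ l.length) (act_inv X (i := i) hs)
  have h2 : (zS (ins i l) : V K B) ∈ Wk K B (l.length + 1) := zS_mem (by rw [ins_length])
  simpa using Submodule.add_mem _ h1 h2

lemma act_cons_gt {i j : B} {t : List B} (hs : (j :: t).Pairwise (· ≤ ·)) (h : ¬ i ≤ j) :
    act X i (j :: t) = zS (j :: ins i t)
      + (act X i t - zS (ins i t)).sum (fun ν c => c • act X j ν.1)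
      + (X.repr ⁅X i, X j⁆).sum (fun b c => c • act X b t) := by
  have hts : t.Pairwise (· ≤ ·) := hs.of_cons
  show acta X (t.length + 1 + 1) i (j :: t) = _
  simp only [acta, if_neg h]
  rw [acta_eq_act X hts (lt_add_one _)]
  have e1 : ((act X i t - zS (ins i t)).sum (fun ν c => c • acta X (t.length + 1) j ν.1))
      = ((act X i t - zS (ins i t)).sum (fun ν c => c • act X j ν.1)) := by
    refine Finsupp.sum_congr (fun ν hν => ?_)
    have hνlen : ν.1.length ≤ t.length := mem_Wk_iff.mp (act_inv X hts) ν hν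
    rw [acta_eq_act X ν.2 (by omega)]
  have e2 : ((X.repr ⁅X i, X j⁆).sum (fun b c => c • acta X (t.length + 1) b t))
      = ((X.repr ⁅X i, X j⁆).sum (fun b c => c • act X b t)) := by
    refine Finsupp.sum_congr (fun b _ => ?_)
    rw [acta_eq_act X hts (lt_add_one _)]
  rw [e1, e2]

/-- the action as a linear endomorphism of `V` -/
noncomputable def Act (i : B) : V K B →ₗ[K] V K B :=
  Finsupp.lsum K fun (ν : SL B) => LinearMap.toSpanSingleton K (V K B) (act X i ν.1)

lemma Act_single (i : B) (ν : SL B) (c : K) :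
    Act X i (Finsupp.single ν c) = c • act X i ν.1 := by
  simp [Act, LinearMap.toSpanSingleton_apply]

lemma Act_apply (i : B) (v : V K B) :
    Act X i v = v.sum fun ν c => c • act X i ν.1 := by
  simp [Act, Finsupp.lsum_apply, Finsupp.sum, LinearMap.toSpanSingleton_apply]

lemma Act_zS {l : List B} (i : B) (h : l.Pairwise (· ≤ ·)) :
    Act X i (zS l) = act X i l := by
  rw [zS_eq_single h, Act_single, one_smul]

lemma act_of_sorted {j : B} {m : List B} (h : (j :: m).Pairwise (· ≤ ·)) :
    act X j m = zS (j :: m) := by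
  cases m with
  | nil => rfl
  | cons a s => exact act_cons_le X _ ((List.pairwise_cons.mp h).1 a (by simp))

/-- `ρ` : the linear map `L → End V` extending `Act` -/
noncomputable def rho : L →ₗ[K] Module.End K (V K B) :=
  X.constr K fun b => Act X b

lemma rho_basis (i : B) : rho X (X i) = Act X i := X.constr_basis _ _ _

lemma rho_zS (y : L) {t : List B} (h : t.Pairwise (· ≤ ·)) :
    rho X y (zS t) = (X.repr y).sum fun b c => c • act X b t := by
  rw [rho, Module.Basis.constr_apply]
  rw [Finsupp.sum, Finsupp.sum, LinearMap.sum_apply]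
  refine Finset.sum_congr rfl (fun b _ => ?_)
  rw [LinearMap.smul_apply, Act_zS X b h]

lemma act_cons_gt' {i j : B} {t : List B} (hs : (j :: t).Pairwise (· ≤ ·)) (h : ¬ i ≤ j) :
    act X i (j :: t) = Act X j (act X i t) + rho X ⁅X i, X j⁆ (zS t) := by
  have hts : t.Pairwise (· ≤ ·) := hs.of_cons
  rw [act_cons_gt X hs h, rho_zS X _ hts]
  congr 1
  have hdecomp : act X i t = zS (ins i t) + (act X i t - zS (ins i t)) := by abel
  conv_rhs => rw [hdecomp]
  rw [map_add, Act_zS X j (ins_sorted i hts), act_of_sorted X (sorted_cons_ins hs h),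
    Act_apply]

lemma caseA0 {i j : B} {t : List B} (hs : (j :: t).Pairwise (· ≤ ·)) (h : ¬ i ≤ j) :
    Act X i (Act X j (zS t)) = Act X j (Act X i (zS t)) + rho X ⁅X i, X j⁆ (zS t) := by
  have hts : t.Pairwise (· ≤ ·) := hs.of_cons
  rw [Act_zS X j hts, act_of_sorted X hs, Act_zS X i hs, act_cons_gt' X hs h, Act_zS X i hts]

/-- the commutator identity for a pair of basis vectors at `v` -/
def Cpair (i j : B) (v : V K B) : Prop :=
  Act X i (Act X j v) - Act X j (Act X i v) = rho X ⁅X i, X j⁆ v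

lemma Cpair_zero (i j : B) : Cpair X i j 0 := by simp [Cpair]

lemma Cpair_add {i j : B} {v w : V K B} (h1 : Cpair X i j v) (h2 : Cpair X i j w) :
    Cpair X i j (v + w) := by
  unfold Cpair at *
  simp only [map_add]
  rw [add_sub_add_comm, h1, h2]

lemma Cpair_smul {i j : B} {v : V K B} (c : K) (h : Cpair X i j v) :
    Cpair X i j (c • v) := by
  unfold Cpair at *
  simp only [map_smul]
  rw [← smul_sub, h]

lemma Cpair_swap {i j : B} {v : V K B} (h : Cpair X j i v) : Cpair X i j v := by
  unfold Cpair at *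
  rw [← neg_sub, h, ← lie_skew, map_neg, LinearMap.neg_apply, neg_neg]

lemma caseA {i j : B} {t : List B} (hs : (j :: t).Pairwise (· ≤ ·)) :
    Cpair X i j (zS t) := by
  have hts : t.Pairwise (· ≤ ·) := hs.of_cons
  rcases lt_trichotomy i j with hij | rfl | hij
  · refine Cpair_swap X ?_
    unfold Cpair
    have hs' : (i :: t).Pairwise (· ≤ ·) := by
      rw [List.pairwise_cons] at hs ⊢
      exact ⟨fun b hb => le_trans hij.le (hs.1 b hb), hs.2⟩
    rw [caseA0 X hs' (not_le.mpr hij), add_sub_cancel_left]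
  · unfold Cpair
    simp
  · unfold Cpair
    rw [caseA0 X hs (not_le.mpr hij), add_sub_cancel_left]

section cgen

variable {s : Set (SL B)}

lemma cpair_supported (H : ∀ ν ∈ s, ∀ i j : B, Cpair X i j (Finsupp.single ν (1 : K)))
    (i j : B) : ∀ v ∈ Finsupp.supported K K s, Cpair X i j v := by
  intro v hv
  rw [Finsupp.supported_eq_span_single] at hv
  induction hv using Submodule.span_induction with
  | mem x hx => obtain ⟨ν, hν, rfl⟩ := hx; exact H ν hν i j
  | zero => exact Cpair_zero X i j
  | add v w _ _ ihv ihw => exact Cpair_add X ihv ihw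
  | smul c v _ ihv => exact Cpair_smul X c ihv

lemma cgen_mid (H : ∀ ν ∈ s, ∀ i j : B, Cpair X i j (Finsupp.single ν (1 : K)))
    (i : B) (y : L) : ∀ v ∈ Finsupp.supported K K s,
    Act X i (rho X y v) - rho X y (Act X i v) = rho X ⁅X i, y⁆ v := by
  intro v hv
  have hy : y ∈ Submodule.span K (Set.range X) := by rw [X.span_eq]; trivial
  induction hy using Submodule.span_induction with
  | mem x hx =>
    obtain ⟨b, rfl⟩ := hx
    have := cpair_supported X H i b v hv
    unfold Cpair at this
    rw [rho_basis]
    exact this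
  | zero => simp
  | add y z _ _ ihy ihz =>
    simp only [map_add, LinearMap.add_apply, lie_add]
    rw [add_sub_add_comm, ihy, ihz]
  | smul c y _ ihy =>
    simp only [map_smul, LinearMap.smul_apply, lie_smul]
    rw [← smul_sub, ihy]

lemma cgen (H : ∀ ν ∈ s, ∀ i j : B, Cpair X i j (Finsupp.single ν (1 : K)))
    (x y : L) : ∀ v ∈ Finsupp.supported K K s,
    rho X x (rho X y v) - rho X y (rho X x v) = rho X ⁅x, y⁆ v := by
  intro v hv
  have hx : x ∈ Submodule.span K (Set.range X) := by rw [X.span_eq]; trivial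
  induction hx using Submodule.span_induction with
  | mem x' hx' =>
    obtain ⟨b, rfl⟩ := hx'
    rw [rho_basis]
    exact cgen_mid X H b y v hv
  | zero => simp
  | add a b _ _ iha ihb =>
    simp only [map_add, LinearMap.add_apply, add_lie]
    rw [add_sub_add_comm, iha, ihb]
  | smul c a _ iha =>
    simp only [map_smul, LinearMap.smul_apply, smul_lie]
    rw [← smul_sub, iha]

end cgen

lemma jac (x y z : L) : ⁅⁅x, z⁆, y⁆ - ⁅⁅y, z⁆, x⁆ = ⁅⁅x, y⁆, z⁆ := by
  rw [show ⁅⁅x, z⁆, y⁆ = -⁅y, ⁅x, z⁆⁆ from (lie_skew _ _).symm,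
    show ⁅⁅y, z⁆, x⁆ = -⁅x, ⁅y, z⁆⁆ from (lie_skew _ _).symm,
    leibniz_lie x y z]
  abel

theorem cpair_all (n : ℕ) : ∀ (t : List B), t.Pairwise (· ≤ ·) → t.length < n →
    ∀ i j : B, Cpair X i j (zS t) := by
  induction n with
  | zero => intro t _ h; omega
  | succ n IH =>
    intro t hs hlen i j
    by_cases hsmall : t.length < n
    · exact IH t hs hsmall i j
    have hn : t.length = n := by omega
    -- machinery available for vectors supported in lengths < n
    set s : Set (SL B) := {ν : SL B | ν.1.length < n} with hs_def
    have H : ∀ ν ∈ s, ∀ i j : B, Cpair X i j (Finsupp.single ν (1 : K)) := by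
      intro ν hν i j
      have := IH ν.1 ν.2 hν i j
      rwa [zS_eq_single ν.2] at this
    match t with
    | [] => exact caseA X (by simp)
    | k :: u =>
      have hu : u.Pairwise (· ≤ ·) := hs.of_cons
      have hku : ∀ b ∈ u, k ≤ b := (List.pairwise_cons.mp hs).1
      have hulen : u.length < n := by simp at hn; omega
      by_cases hjk : j ≤ k
      · refine caseA X ?_
        rw [List.pairwise_cons]
        refine ⟨fun b hb => ?_, hs⟩
        rcases List.mem_cons.mp hb with rfl | hb
        · exact hjk
        · exact le_trans hjk (hku b hb)
      by_cases hik : i ≤ k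
      · refine Cpair_swap X ?_
        refine caseA X ?_
        rw [List.pairwise_cons]
        refine ⟨fun b hb => ?_, hs⟩
        rcases List.mem_cons.mp hb with rfl | hb
        · exact hik
        · exact le_trans hik (hku b hb)
      -- the hard case : k < i, k < j
      have hzu : (zS u : V K B) ∈ Finsupp.supported K K s := by
        rw [zS_eq_single hu]
        exact Finsupp.single_mem_supported K 1 hulen
      have Hgenu : ∀ x y : L, rho X x (rho X y (zS u)) - rho X y (rho X x (zS u))
          = rho X ⁅x, y⁆ (zS u) := fun x y => cgen X H x y _ hzu
      have IHu : ∀ a b : B, Cpair X a b (zS u) := fun a b => IH u hu hulen a b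
      -- Cpair a k at (Act b (zS u)) for a b > k
      have hCbz : ∀ a b : B, ¬ a ≤ k → ¬ b ≤ k → Cpair X a k (Act X b (zS u)) := by
        intro a b ha hb
        have hdecomp : Act X b (zS u) = zS (ins b u) + (act X b u - zS (ins b u)) := by
          rw [Act_zS X b hu]; abel
        rw [hdecomp]
        refine Cpair_add X ?_ ?_
        · refine caseA X ?_
          rw [List.pairwise_cons]
          refine ⟨fun c hc => ?_, ins_sorted b hu⟩
          rcases mem_ins.mp hc with rfl | hc
          · exact (lt_of_not_ge hb).le
          · exact hku c hc
        · have hw : act X b u - zS (ins b u) ∈ Finsupp.supported K K s := by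
            have := act_inv X (i := b) hu
            exact Finsupp.supported_mono (t := s) (fun ν hν => lt_of_le_of_lt hν hulen) this
          exact cpair_supported X H a k _ hw
      -- abbreviations
      have hZ : (zS (k :: u) : V K B) = Act X k (zS u) := by
        rw [Act_zS X k hu, act_of_sorted X hs]
      have eb : ∀ b : B, ¬ b ≤ k →
          Act X b (Act X k (zS u)) = Act X k (Act X b (zS u)) + rho X ⁅X b, X k⁆ (zS u) :=
        fun b hb => caseA0 X hs hb
      unfold Cpair
      rw [hZ]
      have E1 : Act X i (Act X j (Act X k (zS u)))
          = Act X k (Act X i (Act X j (zS u))) + rho X ⁅X i, X k⁆ (Act X j (zS u))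
            + Act X i (rho X ⁅X j, X k⁆ (zS u)) := by
        rw [eb j hjk, map_add]
        have := hCbz i j hik hjk
        unfold Cpair at this
        rw [eq_add_of_sub_eq this]
        abel
      have E2 : Act X j (Act X i (Act X k (zS u)))
          = Act X k (Act X j (Act X i (zS u))) + rho X ⁅X j, X k⁆ (Act X i (zS u))
            + Act X j (rho X ⁅X i, X k⁆ (zS u)) := by
        rw [eb i hik, map_add]
        have := hCbz j i hjk hik
        unfold Cpair at this
        rw [eq_add_of_sub_eq this]
        abel
      have E3 : Act X i (Act X j (zS u)) - Act X j (Act X i (zS u))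
          = rho X ⁅X i, X j⁆ (zS u) := IHu i j
      have E4 : rho X ⁅X i, X k⁆ (Act X j (zS u)) - Act X j (rho X ⁅X i, X k⁆ (zS u))
          = rho X ⁅⁅X i, X k⁆, X j⁆ (zS u) := by
        have := Hgenu ⁅X i, X k⁆ (X j)
        rwa [rho_basis] at this
      have E5 : rho X ⁅X j, X k⁆ (Act X i (zS u)) - Act X i (rho X ⁅X j, X k⁆ (zS u))
          = rho X ⁅⁅X j, X k⁆, X i⁆ (zS u) := by
        have := Hgenu ⁅X j, X k⁆ (X i)
        rwa [rho_basis] at this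
      have E6 : rho X ⁅X i, X j⁆ (Act X k (zS u))
          = rho X ⁅⁅X i, X j⁆, X k⁆ (zS u) + Act X k (rho X ⁅X i, X j⁆ (zS u)) := by
        have := Hgenu ⁅X i, X j⁆ (X k)
        rw [rho_basis] at this
        exact eq_add_of_sub_eq this
      calc Act X i (Act X j (Act X k (zS u))) - Act X j (Act X i (Act X k (zS u)))
          = (Act X k (Act X i (Act X j (zS u))) - Act X k (Act X j (Act X i (zS u))))
            + ((rho X ⁅X i, X k⁆ (Act X j (zS u)) - Act X j (rho X ⁅X i, X k⁆ (zS u)))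
              - (rho X ⁅X j, X k⁆ (Act X i (zS u)) - Act X i (rho X ⁅X j, X k⁆ (zS u)))) := by
            rw [E1, E2]; abel
        _ = Act X k (rho X ⁅X i, X j⁆ (zS u))
            + (rho X ⁅⁅X i, X k⁆, X j⁆ (zS u) - rho X ⁅⁅X j, X k⁆, X i⁆ (zS u)) := by
            rw [← map_sub (Act X k), E3, E4, E5]
        _ = Act X k (rho X ⁅X i, X j⁆ (zS u)) + rho X ⁅⁅X i, X j⁆, X k⁆ (zS u) := by
            rw [← LinearMap.sub_apply, ← map_sub (rho X), jac]
        _ = rho X ⁅X i, X j⁆ (Act X k (zS u)) := by rw [E6]; abel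

lemma cpair_univ (x y : L) (v : V K B) :
    rho X x (rho X y v) - rho X y (rho X x v) = rho X ⁅x, y⁆ v := by
  have H : ∀ ν ∈ (Set.univ : Set (SL B)), ∀ i j : B,
      Cpair X i j (Finsupp.single ν (1 : K)) := by
    intro ν _ i j
    have := cpair_all X (ν.1.length + 1) ν.1 ν.2 (lt_add_one _) i j
    rwa [zS_eq_single ν.2] at this
  refine cgen X H x y v ?_
  rw [Finsupp.supported_univ]
  trivial

/-- the representation of `L` on `V` -/
noncomputable def rhoLie : L →ₗ⁅K⁆ Module.End K (V K B) :=
  { rho X with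
    map_lie' := by
      intro x y
      refine LinearMap.ext fun v => ?_
      have := cpair_univ X x y v
      simpa [Ring.lie_def, LinearMap.sub_apply, Module.End.mul_apply] using this.symm }

/-- the (unordered) monomial attached to a list -/
noncomputable def mono (l : List B) : UniversalEnvelopingAlgebra K L :=
  (l.map fun i => UniversalEnvelopingAlgebra.ι K (X i)).prod

lemma lift_mono_vac (l : List B) (h : l.Pairwise (· ≤ ·)) :
    (UniversalEnvelopingAlgebra.lift K (rhoLie X) (mono X l)) (zS []) = zS l := by
  induction l with
  | nil => simp [mono]
  | cons i t ih =>
    have hts : t.Pairwise (· ≤ ·) := h.of_cons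
    simp only [mono, List.map_cons, List.prod_cons, map_mul, Module.End.mul_apply]
    rw [show ((t.map fun i => UniversalEnvelopingAlgebra.ι K (X i)).prod) = mono X t from rfl,
      ih hts, UniversalEnvelopingAlgebra.lift_ι_apply]
    show rho X (X i) (zS t) = zS (i :: t)
    rw [rho_basis, Act_zS X i hts, act_of_sorted X h]

theorem indep : LinearIndependent K (fun l : SL B => mono X l.1) := by
  let σ := UniversalEnvelopingAlgebra.lift K (rhoLie X)
  let φ : UniversalEnvelopingAlgebra K L →ₗ[K] V K B :=
    { toFun := fun u => σ u (zS [])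
      map_add' := by intro a b; simp
      map_smul' := by intro c a; simp }
  refine LinearIndependent.of_comp φ ?_
  have hcomp : (fun l : SL B => φ (mono X l.1)) = fun ν : SL B => Finsupp.single ν (1 : K) := by
    funext l
    show σ (mono X l.1) (zS []) = _
    rw [lift_mono_vac X l.1 l.2, zS_eq_single l.2]
  show LinearIndependent K (fun l : SL B => φ (mono X l.1))
  rw [hcomp]
  have := (Finsupp.basisSingleOne (R := K) (ι := SL B)).linearIndependent
  simpa using this

/-- span of ordered monomials of length at most `n` -/
noncomputable def Sn (n : ℕ) : Submodule K (UniversalEnvelopingAlgebra K L) :=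
  Submodule.span K ((fun l => mono X l) '' {l : List B | l.Pairwise (· ≤ ·) ∧ l.length ≤ n})

lemma Sn_mono {n m : ℕ} (h : n ≤ m) : Sn X n ≤ Sn X m :=
  Submodule.span_mono (Set.image_mono (fun l hl => ⟨hl.1, le_trans hl.2 h⟩))

lemma mono_mem_Sn {l : List B} (hs : l.Pairwise (· ≤ ·)) {n : ℕ} (h : l.length ≤ n) :
    mono X l ∈ Sn X n :=
  Submodule.subset_span ⟨l, ⟨hs, h⟩, rfl⟩

lemma mono_cons (i : B) (t : List B) :
    mono X (i :: t) = UniversalEnvelopingAlgebra.ι K (X i) * mono X t := by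
  simp [mono]

lemma straighten (n : ℕ) : ∀ (i : B) (l : List B), l.Pairwise (· ≤ ·) → l.length ≤ n →
    UniversalEnvelopingAlgebra.ι K (X i) * mono X l - mono X (ins i l) ∈ Sn X n := by
  induction n with
  | zero =>
    intro i l _ hl
    obtain rfl : l = [] := List.length_eq_zero_iff.mp (Nat.le_zero.mp hl)
    rw [ins_nil]
    simp [mono]
  | succ n IH =>
    -- multiplication by a generator sends `Sn n` into `Sn (n+1)`
    have mul_basis : ∀ (i : B) (l : List B), l.Pairwise (· ≤ ·) → l.length ≤ n →
        UniversalEnvelopingAlgebra.ι K (X i) * mono X l ∈ Sn X (n + 1) := by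
      intro i l hs hl
      have h1 := Sn_mono X (Nat.le_succ n) (IH i l hs hl)
      have h2 : mono X (ins i l) ∈ Sn X (n + 1) :=
        mono_mem_Sn X (ins_sorted i hs) (by rw [ins_length]; omega)
      simpa using Submodule.add_mem _ h1 h2
    have mul_Sn : ∀ (j : B) (v : UniversalEnvelopingAlgebra K L), v ∈ Sn X n →
        UniversalEnvelopingAlgebra.ι K (X j) * v ∈ Sn X (n + 1) := by
      intro j v hv
      induction hv using Submodule.span_induction with
      | mem x hx =>
        obtain ⟨l, ⟨hs, hl⟩, rfl⟩ := hx
        exact mul_basis j l hs hl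
      | zero => simp [Submodule.zero_mem]
      | add a b _ _ iha ihb => rw [mul_add]; exact Submodule.add_mem _ iha ihb
      | smul c a _ iha => rw [mul_smul_comm]; exact Submodule.smul_mem _ _ iha
    have mul_lin : ∀ (y : L) (t : List B), t.Pairwise (· ≤ ·) → t.length ≤ n →
        UniversalEnvelopingAlgebra.ι K y * mono X t ∈ Sn X (n + 1) := by
      intro y t hs hl
      have hy : y ∈ Submodule.span K (Set.range X) := by rw [X.span_eq]; trivial
      induction hy using Submodule.span_induction with
      | mem x hx => obtain ⟨b, rfl⟩ := hx; exact mul_basis b t hs hl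
      | zero => simp [Submodule.zero_mem]
      | add a b _ _ iha ihb => rw [map_add, add_mul]; exact Submodule.add_mem _ iha ihb
      | smul c a _ iha => rw [map_smul, smul_mul_assoc]; exact Submodule.smul_mem _ _ iha
    intro i l hs hl
    match l with
    | [] =>
      rw [ins_nil]
      simp [mono]
    | j :: t =>
      have hts : t.Pairwise (· ≤ ·) := hs.of_cons
      have htl : t.length ≤ n := by simp at hl; omega
      by_cases hij : i ≤ j
      · rw [ins_cons_of_le t hij,
          show mono X (i :: j :: t) = UniversalEnvelopingAlgebra.ι K (X i) * mono X (j :: t)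
            from mono_cons X i (j :: t), sub_self]
        exact Submodule.zero_mem _
      · rw [ins_cons_of_gt t hij]
        have comm : UniversalEnvelopingAlgebra.ι K (X i) * UniversalEnvelopingAlgebra.ι K (X j)
            = UniversalEnvelopingAlgebra.ι K (X j) * UniversalEnvelopingAlgebra.ι K (X i)
              + (UniversalEnvelopingAlgebra.ι K ⁅X i, X j⁆ :
                  UniversalEnvelopingAlgebra K L) := by
          have h := LieHom.map_lie
            (UniversalEnvelopingAlgebra.ι K : L →ₗ⁅K⁆ UniversalEnvelopingAlgebra K L)
            (X i) (X j)
          rw [Ring.lie_def] at h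
          rw [h]
          abel
        rw [mono_cons, ← mul_assoc, comm, add_mul, mul_assoc]
        rw [show UniversalEnvelopingAlgebra.ι K (X i) * mono X t
            = mono X (ins i t)
              + (UniversalEnvelopingAlgebra.ι K (X i) * mono X t - mono X (ins i t)) by abel]
        rw [mul_add, show UniversalEnvelopingAlgebra.ι K (X j) * mono X (ins i t)
            = mono X (j :: ins i t) from (mono_cons X j (ins i t)).symm]
        have m1 : UniversalEnvelopingAlgebra.ι K (X j)
            * (UniversalEnvelopingAlgebra.ι K (X i) * mono X t - mono X (ins i t))
            ∈ Sn X (n + 1) := mul_Sn j _ (IH i t hts htl)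
        have m2 : UniversalEnvelopingAlgebra.ι K ⁅X i, X j⁆ * mono X t ∈ Sn X (n + 1) :=
          mul_lin ⁅X i, X j⁆ t hts htl
        have : mono X (j :: ins i t)
            + UniversalEnvelopingAlgebra.ι K (X j)
              * (UniversalEnvelopingAlgebra.ι K (X i) * mono X t - mono X (ins i t))
            + UniversalEnvelopingAlgebra.ι K ⁅X i, X j⁆ * mono X t
            - mono X (j :: ins i t)
            = UniversalEnvelopingAlgebra.ι K (X j)
              * (UniversalEnvelopingAlgebra.ι K (X i) * mono X t - mono X (ins i t))
            + UniversalEnvelopingAlgebra.ι K ⁅X i, X j⁆ * mono X t := by abel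
        rw [this]
        exact Submodule.add_mem _ m1 m2

/-- the span of all ordered monomials -/
noncomputable def Sfull : Submodule K (UniversalEnvelopingAlgebra K L) :=
  Submodule.span K (Set.range (fun l : SL B => mono X l.1))

lemma Sn_le_Sfull (n : ℕ) : Sn X n ≤ Sfull X := by
  refine Submodule.span_le.mpr ?_
  rintro x ⟨l, ⟨hs, _⟩, rfl⟩
  exact Submodule.subset_span ⟨⟨l, hs⟩, rfl⟩

lemma mul_basis_mem_Sfull (i : B) {l : List B} (hs : l.Pairwise (· ≤ ·)) :
    UniversalEnvelopingAlgebra.ι K (X i) * mono X l ∈ Sfull X := by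
  have h1 := straighten X l.length i l hs le_rfl
  have h2 : mono X (ins i l) ∈ Sn X (l.length + 1) :=
    mono_mem_Sn X (ins_sorted i hs) (by rw [ins_length])
  have := Submodule.add_mem _ (Sn_le_Sfull X _ h1) (Sn_le_Sfull X _ h2)
  simpa using this

lemma mul_lin_mem_Sfull (y : L) {l : List B} (hs : l.Pairwise (· ≤ ·)) :
    UniversalEnvelopingAlgebra.ι K y * mono X l ∈ Sfull X := by
  have hy : y ∈ Submodule.span K (Set.range X) := by rw [X.span_eq]; trivial
  induction hy using Submodule.span_induction with
  | mem x hx => obtain ⟨b, rfl⟩ := hx; exact mul_basis_mem_Sfull X b hs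
  | zero => simp [Submodule.zero_mem]
  | add a b _ _ iha ihb => rw [map_add, add_mul]; exact Submodule.add_mem _ iha ihb
  | smul c a _ iha => rw [map_smul, smul_mul_assoc]; exact Submodule.smul_mem _ _ iha

lemma mul_mem_Sfull (x : L) {v : UniversalEnvelopingAlgebra K L} (hv : v ∈ Sfull X) :
    UniversalEnvelopingAlgebra.ι K x * v ∈ Sfull X := by
  induction hv using Submodule.span_induction with
  | mem u hu => obtain ⟨l, rfl⟩ := hu; exact mul_lin_mem_Sfull X x l.2
  | zero => simp [Submodule.zero_mem]
  | add a b _ _ iha ihb => rw [mul_add]; exact Submodule.add_mem _ iha ihb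
  | smul c a _ iha => rw [mul_smul_comm]; exact Submodule.smul_mem _ _ iha

lemma U_induction {C : UniversalEnvelopingAlgebra K L → Prop}
    (halg : ∀ r : K, C (algebraMap K (UniversalEnvelopingAlgebra K L) r))
    (hι : ∀ x : L, C (UniversalEnvelopingAlgebra.ι K x))
    (hmul : ∀ a b, C a → C b → C (a * b))
    (hadd : ∀ a b, C a → C b → C (a + b)) :
    ∀ u : UniversalEnvelopingAlgebra K L, C u := by
  intro u
  obtain ⟨a, rfl⟩ : ∃ a, UniversalEnvelopingAlgebra.mkAlgHom K L a = u :=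
    RingCon.mkₐ_surjective (α := K) _ u
  induction a using TensorAlgebra.induction with
  | algebraMap r => rw [AlgHom.commutes]; exact halg r
  | ι x =>
    have h : UniversalEnvelopingAlgebra.mkAlgHom K L (TensorAlgebra.ι K x)
        = UniversalEnvelopingAlgebra.ι K x := rfl
    rw [h]; exact hι x
  | mul a b ha hb => rw [map_mul]; exact hmul _ _ ha hb
  | add a b ha hb => rw [map_add]; exact hadd _ _ ha hb

theorem spans : Sfull X = ⊤ := by
  rw [Submodule.eq_top_iff']
  have key : ∀ u : UniversalEnvelopingAlgebra K L, ∀ v ∈ Sfull X, u * v ∈ Sfull X := by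
    refine U_induction (C := fun u => ∀ v ∈ Sfull X, u * v ∈ Sfull X) ?_ ?_ ?_ ?_
    · intro r v hv
      rw [← Algebra.smul_def]
      exact Submodule.smul_mem _ _ hv
    · intro x v hv
      exact mul_mem_Sfull X x hv
    · intro a b ha hb v hv
      rw [mul_assoc]
      exact ha _ (hb v hv)
    · intro a b ha hb v hv
      rw [add_mul]
      exact Submodule.add_mem _ (ha v hv) (hb v hv)
  intro u
  have h1 : mono X [] ∈ Sfull X := Submodule.subset_span ⟨⟨[], by simp⟩, rfl⟩
  have := key u _ h1
  simpa [mono] using this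

end PBW

/-- (Poincaré–Birkhoff–Witt) Let `𝔤` be a Lie algebra over a field with ordered basis
`X₁, X₂, …`. Then the ordered monomials `X_{i₁} X_{i₂} ⋯ X_{i_k}` with
`i₁ ≤ i₂ ≤ ⋯ ≤ i_k` form a basis of the universal enveloping algebra `U(𝔤)`. -/
theorem stmt_18 {K : Type*} [Field K] [CharZero K] {L : Type*} [LieRing L]
    [LieAlgebra K L] {B : Type*} [LinearOrder B] (X : Module.Basis B K L) :
    LinearIndependent K
      (fun l : {l : List B // l.Pairwise (· ≤ ·)} =>
        ((l : List B).map fun i => UniversalEnvelopingAlgebra.ι K (X i)).prod) ∧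
    Submodule.span K
      (Set.range (fun l : {l : List B // l.Pairwise (· ≤ ·)} =>
        ((l : List B).map fun i => UniversalEnvelopingAlgebra.ι K (X i)).prod)) = ⊤ := by
  exact ⟨PBW.indep X, PBW.spans X⟩
end
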